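/- arXiv:2309.10562 — 8 statements merged into one kernel-verified Lean document; each statement's English description precedes it below -/
import Mathlib

section
/- The binary Fibonacci sequence fib = f^∞(0), where f(0) = 01 and f(1) = 0 on the alphabet {0,1}, is not ultimately periodic. -/
/-- Applying a morphism `f : Γ → Γ⁺` to an infinite sequence `σ`. -/
def seqFlat {Γ : Type*} (f : Γ → List Γ) (σ : ℕ → Γ) (n : ℕ) : Γ :=
  (((List.range (n + 1)).flatMap fun i => f (σ i)).getD n (σ 0))

/-- The Fibonacci morphism `f 0 = 01`, `f 1 = 0` on `{0,1}`. -/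
def fibMor : ℕ → List ℕ := fun n => if n = 0 then [0, 1] else [0]

namespace FibAux

/-- Number of zeros among `σ 0, …, σ (n-1)`. -/
def Zc (σ : ℕ → ℕ) (n : ℕ) : ℕ := ∑ i ∈ Finset.range n, (if σ i = 0 then 1 else 0)

lemma Zc_succ (σ : ℕ → ℕ) (n : ℕ) :
    Zc σ (n + 1) = Zc σ n + (if σ n = 0 then 1 else 0) := Finset.sum_range_succ _ _

lemma Zc_mono (σ : ℕ → ℕ) : Monotone (Zc σ) := by
  intro m n h
  exact Finset.sum_le_sum_of_subset_of_nonneg (Finset.range_subset_range.mpr h)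
    (fun i _ _ => by positivity)

/-- The flattening of the first `k` letters. -/
def Wf (σ : ℕ → ℕ) (k : ℕ) : List ℕ := (List.range k).flatMap fun i => fibMor (σ i)

lemma Wf_succ (σ : ℕ → ℕ) (k : ℕ) : Wf σ (k + 1) = Wf σ k ++ fibMor (σ k) := by
  simp [Wf, List.range_succ]

lemma Wf_length (σ : ℕ → ℕ) (k : ℕ) : (Wf σ k).length = k + Zc σ k := by
  induction k with
  | zero => simp [Wf, Zc]
  | succ k ih =>
    rw [Wf_succ, List.length_append, ih, Zc_succ]
    unfold fibMor
    split <;> simp <;> omega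

lemma Wf_prefix (σ : ℕ → ℕ) {a b : ℕ} (h : a ≤ b) : Wf σ a <+: Wf σ b := by
  induction b, h using Nat.le_induction with
  | base => exact List.prefix_refl _
  | succ b hb ih => rw [Wf_succ]; exact ih.trans (List.prefix_append _ _)

lemma getD_of_prefix {l₁ l₂ : List ℕ} (h : l₁ <+: l₂) {m : ℕ} (hm : m < l₁.length) (d : ℕ) :
    l₂.getD m d = l₁.getD m d := by
  obtain ⟨t, rfl⟩ := h
  rw [List.getD_append _ _ _ _ hm]

lemma sigma_eq (σ : ℕ → ℕ) (hσ0 : σ 0 = 0) (hfix : seqFlat fibMor σ = σ)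
    {k m : ℕ} (hm : m < (Wf σ k).length) :
    σ m = (Wf σ k).getD m 0 := by
  have h1 : σ m = (Wf σ (m + 1)).getD m 0 := by
    conv_lhs => rw [← hfix]
    simp [seqFlat, Wf, hσ0]
  have hlen : m < (Wf σ (m + 1)).length := by
    rw [Wf_length]; omega
  rcases le_or_gt (m + 1) k with h | h
  · rw [h1, getD_of_prefix (Wf_prefix σ h) hlen]
  · rw [h1, getD_of_prefix (Wf_prefix σ (by omega : k ≤ m + 1)) hm]

lemma Zc_len (σ : ℕ → ℕ) (hσ0 : σ 0 = 0) (hfix : seqFlat fibMor σ = σ) (k : ℕ) :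
    Zc σ ((Wf σ k).length) = k := by
  induction k with
  | zero => simp [Wf, Zc]
  | succ k ih =>
    have hb : fibMor (σ k) = [0, 1] ∨ fibMor (σ k) = [0] := by
      unfold fibMor; split <;> simp
    set L := (Wf σ k).length with hL
    have hσL : σ L = 0 := by
      have hlt : L < (Wf σ (k + 1)).length := by
        rw [Wf_succ, List.length_append]
        rcases hb with hb | hb <;> rw [hb] <;> simp [hL]
      rw [sigma_eq σ hσ0 hfix hlt, Wf_succ, List.getD_append_right _ _ _ _ le_rfl]
      rcases hb with hb | hb <;> rw [hb] <;> simp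
    rcases hb with hb | hb
    · -- block [0,1]
      have hσL1 : σ (L + 1) = 1 := by
        have hlt : L + 1 < (Wf σ (k + 1)).length := by
          rw [Wf_succ, List.length_append, hb]; simp [hL]
        rw [sigma_eq σ hσ0 hfix hlt, Wf_succ,
          List.getD_append_right _ _ _ _ (by omega : L ≤ L + 1), hb]
        simp [hL]
      rw [Wf_succ, List.length_append, hb]
      show Zc σ (L + 2) = k + 1
      rw [show L + 2 = (L + 1) + 1 by ring, Zc_succ, Zc_succ, hσL, hσL1, ih]
      simp
    · -- block [0]
      rw [Wf_succ, List.length_append, hb]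
      show Zc σ (L + 1) = k + 1
      rw [Zc_succ, hσL, ih]
      simp

/-- No positive solution to `x² = 5 y²`. -/
lemma sq_eq_five_sq : ∀ y x : ℕ, x ^ 2 = 5 * y ^ 2 → y = 0 := by
  intro y
  induction y using Nat.strong_induction_on with
  | _ y ih =>
    intro x h
    rcases Nat.eq_zero_or_pos y with hy | hy
    · exact hy
    have h5 : Nat.Prime 5 := by norm_num
    have hx : 5 ∣ x := h5.dvd_of_dvd_pow (h ▸ Dvd.intro _ rfl)
    obtain ⟨c, rfl⟩ := hx
    have h2 : y ^ 2 = 5 * c ^ 2 := by nlinarith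
    have hy5 : 5 ∣ y := h5.dvd_of_dvd_pow (h2 ▸ Dvd.intro _ rfl)
    obtain ⟨d, rfl⟩ := hy5
    have h3 : c ^ 2 = 5 * d ^ 2 := by nlinarith
    have := ih d (by omega) c h3
    omega

lemma key_ne (p : ℕ) (hp : 1 ≤ p) (a : ℤ) (ha : 0 ≤ a) :
    (p : ℤ) ^ 2 - a * p - a ^ 2 ≠ 0 := by
  intro h
  set A := a.toNat with hA
  have haA : (A : ℤ) = a := Int.toNat_of_nonneg ha
  have hn : (p : ℤ) ^ 2 = (A : ℤ) * p + (A : ℤ) ^ 2 := by rw [haA]; linarith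
  have hn' : p ^ 2 = A * p + A ^ 2 := by exact_mod_cast hn
  have h5 : (2 * A + p) ^ 2 = 5 * p ^ 2 := by nlinarith
  have := sq_eq_five_sq p (2 * A + p) h5
  omega

end FibAux

/-- The binary Fibonacci sequence `fib = f^∞(0)` is not ultimately periodic. -/
theorem fib_not_ultimately_periodic (σ : ℕ → ℕ) (hσ0 : σ 0 = 0)
    (hfix : seqFlat fibMor σ = σ) :
    ¬ ∃ (N p : ℕ), 1 ≤ p ∧ ∀ n, N ≤ n → σ (n + p) = σ n := by
  rintro ⟨N, p, hp, hper⟩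
  open FibAux in
  set F : ℕ → ℤ := fun n => (Zc σ n : ℤ) with hF
  have hFs : ∀ n, F (n + 1) = F n + (if σ n = 0 then 1 else 0) := by
    intro n
    simp only [hF, Zc_succ]
    push_cast
    split <;> simp
  have hfixZ : ∀ k, F (k + Zc σ k) = k := by
    intro k
    have := Zc_len σ hσ0 hfix k
    rw [Wf_length] at this
    simp [hF, this]
  set aZ : ℤ := F (N + p) - F N with haZdef
  have hA : ∀ n, N ≤ n → F (n + p) = F n + aZ := by
    intro n hn
    induction n, hn using Nat.le_induction with
    | base => rw [haZdef]; ring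
    | succ n hn ih =>
      rw [show n + 1 + p = (n + p) + 1 by ring, hFs, ih, hper n hn, hFs]
      ring
  have hQ : ∀ q n, N ≤ n → F (n + q * p) = F n + q * aZ := by
    intro q
    induction q with
    | zero => simp
    | succ q ih =>
      intro n hn
      rw [show n + (q + 1) * p = (n + q * p) + p by ring, hA _ (by omega), ih n hn]
      push_cast
      ring
  set g : ℕ → ℤ := fun n => p * F n - aZ * n with hg
  have hgper : ∀ n, N ≤ n → ∃ r, r < p ∧ g n = g (N + r) := by
    intro n hn
    refine ⟨(n - N) % p, Nat.mod_lt _ (by omega), ?_⟩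
    obtain ⟨r, q, hn'⟩ : ∃ r q, (n - N) % p = r ∧ (n - N) / p = q := ⟨_, _, rfl, rfl⟩
    obtain ⟨hr, hq⟩ := hn'
    have hn2 : n = (N + r) + q * p := by
      have h := Nat.mod_add_div (n - N) p
      rw [← hr, ← hq, mul_comm]
      omega
    have hFn : F n = F (N + r) + q * aZ := by
      conv_lhs => rw [hn2]
      exact hQ q (N + r) (by omega)
    have hcast : (n : ℤ) = (N : ℤ) + r + q * p := by exact_mod_cast hn2
    rw [hr]
    simp only [hg]
    rw [hFn, hcast]
    push_cast
    ring
  set C : ℤ := ∑ r ∈ Finset.range p, |g (N + r)| with hC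
  have hC0 : (0 : ℤ) ≤ C := by
    rw [hC]; positivity
  have hCb : ∀ n, N ≤ n → |g n| ≤ C := by
    intro n hn
    obtain ⟨r, hr, he⟩ := hgper n hn
    rw [he, hC]
    exact Finset.single_le_sum (fun i _ => abs_nonneg (g (N + i))) (Finset.mem_range.mpr hr)
  have haZ0 : 0 ≤ aZ := by
    have := Zc_mono σ (show N ≤ N + p by omega)
    simp only [haZdef, hF]
    omega
  -- choose a large k
  set k : ℕ := N + ((p : ℤ) * C + aZ * C).toNat + 1 with hk
  have hkN : N ≤ k := by omega
  set L : ℕ := k + Zc σ k with hLdef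
  have hLN : N ≤ L := by omega
  have hFL : F L = (k : ℤ) := hfixZ k
  have hLZ : (L : ℤ) = (k : ℤ) + F k := by
    simp [hLdef, hF]
  have key : (k : ℤ) * ((p : ℤ) ^ 2 - aZ * p - aZ ^ 2) = p * g L + aZ * g k := by
    simp only [hg]
    rw [hFL, hLZ]
    ring
  have hgk := hCb k hkN
  have hgL := hCb L hLN
  have hD := FibAux.key_ne p hp aZ haZ0
  have hD1 : 1 ≤ |(p : ℤ) ^ 2 - aZ * p - aZ ^ 2| := by
    rcases abs_pos.mpr hD with h
    omega
  have habs : (k : ℤ) * |(p : ℤ) ^ 2 - aZ * p - aZ ^ 2| ≤ p * C + aZ * C := by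
    have h1 : |(k : ℤ) * ((p : ℤ) ^ 2 - aZ * p - aZ ^ 2)| ≤ p * C + aZ * C := by
      rw [key]
      calc |(p : ℤ) * g L + aZ * g k| ≤ |(p : ℤ) * g L| + |aZ * g k| := abs_add_le _ _
        _ = (p : ℤ) * |g L| + aZ * |g k| := by
            rw [abs_mul, abs_mul, abs_of_nonneg (by positivity : (0:ℤ) ≤ (p:ℤ)),
              abs_of_nonneg haZ0]
        _ ≤ (p : ℤ) * C + aZ * C :=
            add_le_add (mul_le_mul_of_nonneg_left hgL (by positivity))
              (mul_le_mul_of_nonneg_left hgk haZ0)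
    rwa [abs_mul, abs_of_nonneg (by positivity : (0:ℤ) ≤ (k:ℤ))] at h1
  have hkbig : (p : ℤ) * C + aZ * C < (k : ℤ) := by
    have h0 : (0 : ℤ) ≤ (p : ℤ) * C + aZ * C := by positivity
    have : (((p : ℤ) * C + aZ * C).toNat : ℤ) = (p : ℤ) * C + aZ * C :=
      Int.toNat_of_nonneg h0
    have hkk : (k : ℤ) = (N : ℤ) + (((p : ℤ) * C + aZ * C).toNat : ℤ) + 1 := by
      rw [hk]; push_cast; ring
    omega
  have : (k : ℤ) ≤ (k : ℤ) * |(p : ℤ) ^ 2 - aZ * p - aZ ^ 2| := by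
    nlinarith [Int.natCast_nonneg k]
  linarith
end

section
/- The sequence spir (the sequence over {0,1} whose 1s occur at positions 0, 1, 3, 6, 10, …, with the number of 0s between the k-th and (k+1)-th one equal to k-1) is not pure morphic: there is no morphism f : {0,1} → {0,1}⁺ with f(1) = 1·u (u nonempty) such that spir = f^∞(1). -/
open Classical

/-- The sequence `spir`: its `1`s occur exactly at the triangular-number positions
`0, 1, 3, 6, 10, …`, with `k-1` zeros between the `k`-th and `(k+1)`-th one. -/
noncomputable def spir (n : ℕ) : ℕ :=
  if ∃ k ∈ Finset.range (n + 1), 2 * n = k * (k + 1) then 1 else 0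

lemma spir_one_iff (n : ℕ) : spir n = 1 ↔ ∃ k ∈ Finset.range (n + 1), 2 * n = k * (k + 1) := by
  unfold spir; split <;> simp_all

lemma spir_zero : spir 0 = 1 := by
  rw [spir_one_iff]; exact ⟨0, by simp, by simp⟩

lemma spir_one' : spir 1 = 1 := by
  rw [spir_one_iff]; exact ⟨1, by simp, by norm_num⟩

lemma spir_three : spir 3 = 1 := by
  rw [spir_one_iff]; exact ⟨2, by simp, by norm_num⟩

lemma no_adjacent (n : ℕ) (hn : 2 ≤ n) (h1 : spir n = 1) (h2 : spir (n + 1) = 1) : False := by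
  rw [spir_one_iff] at h1 h2
  obtain ⟨k, -, hk⟩ := h1
  obtain ⟨j, -, hj⟩ := h2
  rcases lt_trichotomy j (k + 1) with h | h | h
  · have hjk : j ≤ k := by omega
    nlinarith
  · subst h
    have hk0 : k = 0 := by nlinarith
    subst hk0
    norm_num at hk
    omega
  · have hjk : k + 2 ≤ j := h
    nlinarith

/-- `spir` is not pure morphic: there is no morphism `f : {0,1} → {0,1}⁺` with
`f 1 = 1·u` (`u` nonempty) such that `spir = f^∞(1)`. -/
theorem spir_not_pure_morphic :
    ¬ ∃ (f : ℕ → List ℕ) (u : List ℕ) (σ : ℕ → ℕ),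
        (∀ b, f b ≠ []) ∧
        (∀ x ∈ f 0, x ≤ 1) ∧ (∀ x ∈ f 1, x ≤ 1) ∧
        f 1 = 1 :: u ∧ u ≠ [] ∧
        σ 0 = 1 ∧ seqFlat f σ = σ ∧ σ = spir := by
  rintro ⟨f, u, σ, hne, -, -, hf1, hu, -, hfix, rfl⟩
  set g : ℕ → List ℕ := fun i => f (spir i) with hg
  set L : ℕ → ℕ := fun n => ((List.range n).flatMap g).length with hL
  have hgne : ∀ i, g i ≠ [] := fun i => hne _
  have hsplit : ∀ n, (List.range (n + 1)).flatMap g = (List.range n).flatMap g ++ g n := by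
    intro n; rw [List.range_succ]; simp
  have hLsucc : ∀ n, L (n + 1) = L n + (g n).length := by
    intro n; simp only [hL, hsplit, List.length_append]
  have hLge : ∀ n, n ≤ L n := by
    intro n
    induction n with
    | zero => exact Nat.zero_le _
    | succ n ih =>
      have hgl : 1 ≤ (g n).length := List.length_pos_iff.mpr (hgne n)
      have := hLsucc n
      omega
  have hpre : ∀ n m, n ≤ m → ∃ t, (List.range m).flatMap g = (List.range n).flatMap g ++ t := by
    intro n m hnm
    induction m with
    | zero =>
      exact ⟨[], by simp [Nat.le_zero.mp hnm]⟩
    | succ m ih =>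
      rcases Nat.lt_or_ge n (m + 1) with h | h
      · obtain ⟨t, ht⟩ := ih (by omega)
        exact ⟨t ++ g m, by rw [hsplit, ht, List.append_assoc]⟩
      · have hnm' : n = m + 1 := by omega
        exact ⟨[], by simp [hnm']⟩
  have key : ∀ m, ((List.range (m + 1)).flatMap g).getD m (spir 0) = spir m := fun m =>
    congrFun hfix m
  have ext : ∀ n j, j < (g n).length → spir (L n + j) = (g n).getD j (spir 0) := by
    intro n j hj
    have hm1 : n + 1 ≤ L n + j + 1 := by have := hLge n; omega
    obtain ⟨t, ht⟩ := hpre (n + 1) (L n + j + 1) hm1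
    have hLn : ((List.range n).flatMap g).length = L n := rfl
    rw [← key (L n + j), ht, hsplit, List.append_assoc,
      List.getD_append_right _ _ _ _ (by omega : ((List.range n).flatMap g).length ≤ L n + j)]
    have hsub : L n + j - ((List.range n).flatMap g).length = j := by omega
    rw [hsub, List.getD_append _ _ _ _ hj]
  have hg0 : g 0 = 1 :: u := by rw [hg]; simp only [spir_zero, hf1]
  have hg3 : g 3 = 1 :: u := by rw [hg]; simp only [spir_three, hf1]
  have hulen : 1 < (g 0).length := by
    rw [hg0]
    simp only [List.length_cons]
    have := List.length_pos_iff.mpr hu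
    omega
  -- spir 1 = (f 1).getD 1
  have e1 : spir (L 0 + 1) = (g 0).getD 1 (spir 0) := ext 0 1 hulen
  have hL0 : L 0 = 0 := by simp [hL]
  have hgetD1 : (g 0).getD 1 (spir 0) = 1 := by
    rw [← e1, hL0, spir_one']
  -- positions L 3 and L 3 + 1 are both ones
  have e30 : spir (L 3 + 0) = (g 3).getD 0 (spir 0) := by
    refine ext 3 0 ?_
    rw [hg3]; simp
  have e31 : spir (L 3 + 1) = (g 3).getD 1 (spir 0) := by
    refine ext 3 1 ?_
    rw [hg3, ← hg0]; exact hulen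
  have h30 : spir (L 3) = 1 := by
    rw [← Nat.add_zero (L 3), e30, hg3]; simp
  have h31 : spir (L 3 + 1) = 1 := by
    rw [e31, hg3, ← hg0, hgetD1]
  exact no_adjacent (L 3) (le_trans (by norm_num) (hLge 3)) h30 h31
end

section
/- Let σ be a morphic sequence over a finite alphabet Σ. Then there exist a rational tree function P : ℕ⁺ → ℕ such that the set { σ^{S_P(n)} | n ∈ ℕ } of subsequences of σ is finite, where S_P(n) = { m ∈ ℕ | ∃k, P^k(m) = n } and σ^S denotes the subsequence of σ indexed by the elements of the infinite set S in increasing order. -/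
/-- `SP P n = { m | ∃ k, P^k(m) = n }`: the set of descendants of `n` in the tree
defined by the parent function `P`. -/
def SP (P : ℕ → ℕ) (n : ℕ) : Set ℕ := {m | ∃ k : ℕ, P^[k] m = n}

/-- The (ordered) subtrees of the tree of `P` rooted at `m` and at `n` are equal:
there is a strictly monotone bijection between the descendant sets mapping `m` to `n`
and commuting with the parent function. -/
def treeEquiv (P : ℕ → ℕ) (m n : ℕ) : Prop :=
  ∃ φ : ℕ → ℕ, Set.BijOn φ (SP P m) (SP P n) ∧ StrictMonoOn φ (SP P m) ∧
    φ m = n ∧ ∀ x ∈ SP P m, x ≠ m → φ (P x) = P (φ x)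

/-- A tree function is rational if its tree has only finitely many distinct subtrees. -/
def RationalTree (P : ℕ → ℕ) : Prop :=
  ∃ F : Finset ℕ, ∀ n : ℕ, ∃ m ∈ F, treeEquiv P m n

/-- The subsequence `σ^S` of `σ` given by the increasing enumeration of `S`. -/
noncomputable def subseq {A : Type*} (σ : ℕ → A) (S : Set ℕ) (i : ℕ) : A :=
  σ (Nat.nth (· ∈ S) i)

namespace MorphicAux


def bfun (ℓ : ℕ → ℕ) : ℕ → ℕ
  | 0 => 0
  | i + 1 => bfun ℓ i + ℓ i

theorem bfun_strictMono {ℓ : ℕ → ℕ} (hℓ : ∀ i, 1 ≤ ℓ i) : StrictMono (bfun ℓ) :=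
  strictMono_nat_of_lt_succ fun i => by
    have := hℓ i; simp [bfun]; omega

theorem self_le_bfun {ℓ : ℕ → ℕ} (hℓ : ∀ i, 1 ≤ ℓ i) (i : ℕ) : i ≤ bfun ℓ i := by
  induction i with
  | zero => simp [bfun]
  | succ n ih => have := hℓ n; simp [bfun]; omega


theorem bindA {α β : Type*} (l₁ l₂ : List α) (g : α → List β) :
    (l₁ ++ l₂).flatMap g = l₁.flatMap g ++ l₂.flatMap g := by rw [List.flatMap_append]

theorem bindS {α β : Type*} (x : α) (g : α → List β) : [x].flatMap g = g x := by
  simp [List.flatMap]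


variable {ℓ : ℕ → ℕ}

/-- The parent function: `Pfun ℓ x` is the index of the block containing `x`. -/
def Pfun (ℓ : ℕ → ℕ) (x : ℕ) : ℕ := Nat.findGreatest (fun i => bfun ℓ i ≤ x) x

theorem lt_bfun (hℓ : ∀ i, 1 ≤ ℓ i) (h2 : 2 ≤ ℓ 0) (i : ℕ) (hi : 1 ≤ i) :
    i < bfun ℓ i := by
  induction i with
  | zero => omega
  | succ n ih =>
    rcases Nat.eq_zero_or_pos n with rfl | hn
    · simp [bfun]; omega
    · have := hℓ n; have := ih hn; simp [bfun]; omega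

theorem bfun_le_iff (hℓ : ∀ i, 1 ≤ ℓ i) {i x : ℕ} :
    bfun ℓ i ≤ x ↔ i ≤ Pfun ℓ x := by
  constructor
  · intro h
    exact Nat.le_findGreatest ((self_le_bfun hℓ i).trans h) h
  · intro h
    have hspec : bfun ℓ (Pfun ℓ x) ≤ x :=
      Nat.findGreatest_spec (P := fun i => bfun ℓ i ≤ x) (Nat.zero_le x) (by simp [bfun])
    exact le_trans ((bfun_strictMono hℓ).monotone h) hspec

theorem lt_bfun_iff (hℓ : ∀ i, 1 ≤ ℓ i) {i x : ℕ} :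
    x < bfun ℓ i ↔ Pfun ℓ x < i := by
  rw [← not_le, ← not_le, bfun_le_iff hℓ]

theorem Pfun_eq_iff (hℓ : ∀ i, 1 ≤ ℓ i) {i x : ℕ} :
    Pfun ℓ x = i ↔ bfun ℓ i ≤ x ∧ x < bfun ℓ (i + 1) := by
  rw [bfun_le_iff hℓ, lt_bfun_iff hℓ]
  omega

theorem Pfun_iterate (hℓ : ∀ i, 1 ≤ ℓ i) (k : ℕ) (x n : ℕ) :
    (Pfun ℓ)^[k] x = n ↔ (bfun ℓ)^[k] n ≤ x ∧ x < (bfun ℓ)^[k] (n + 1) := by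
  induction k generalizing x with
  | zero => simp; omega
  | succ k ih =>
    rw [Function.iterate_succ_apply, ih (Pfun ℓ x),
      Function.iterate_succ_apply' (bfun ℓ) k n, Function.iterate_succ_apply' (bfun ℓ) k (n+1)]
    rw [show ((bfun ℓ)^[k] n ≤ Pfun ℓ x ↔ bfun ℓ ((bfun ℓ)^[k] n) ≤ x) from
      (bfun_le_iff hℓ).symm,
      show (Pfun ℓ x < (bfun ℓ)^[k] (n+1) ↔ x < bfun ℓ ((bfun ℓ)^[k] (n+1))) from
      (lt_bfun_iff hℓ).symm]

theorem bfun_shift (L : ℕ) : ∀ s, bfun ℓ (L + s) = bfun ℓ L + ∑ j ∈ Finset.range s, ℓ (L + j) := by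
  intro s
  induction s with
  | zero => simp
  | succ s ih => rw [← Nat.add_assoc, Finset.sum_range_succ]; simp [bfun, ih]; omega



section Words


variable {Γ : Type*} (f : Γ → List Γ) (σΓ : ℕ → Γ)

/-- The length function of the blocks. -/
def lenf (i : ℕ) : ℕ := (f (σΓ i)).length

/-- The word of `σΓ` on positions `[L, L+d)`. -/
def wrd (L d : ℕ) : List Γ := (List.range d).map fun j => σΓ (L + j)

theorem wrd_length (L d : ℕ) : (wrd σΓ L d).length = d := by simp [wrd]

theorem wrd_getD (L d t : ℕ) (ht : t < d) (x : Γ) : (wrd σΓ L d).getD t x = σΓ (L + t) := by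
  rw [List.getD_eq_getElem _ _ (by simpa [wrd_length] using ht)]
  simp [wrd]

theorem wrd_append (L c e : ℕ) : wrd σΓ L c ++ wrd σΓ (L + c) e = wrd σΓ L (c + e) := by
  rw [wrd, wrd, wrd, List.range_add, List.map_append, List.map_map]
  congr 1
  apply List.map_congr_left
  intro j _
  simp [Function.comp, Nat.add_assoc]

theorem flat_length (N : ℕ) :
    ((List.range N).flatMap fun i => f (σΓ i)).length = bfun (lenf f σΓ) N := by
  induction N with
  | zero => simp [bfun]
  | succ N ih =>
    rw [List.range_succ, bindA, List.length_append, ih]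
    simp [bfun, lenf]

theorem flat_prefix (M N : ℕ) (h : N ≤ M) :
    ∃ l, (List.range M).flatMap (fun i => f (σΓ i)) =
      ((List.range N).flatMap fun i => f (σΓ i)) ++ l := by
  obtain ⟨d, rfl⟩ := Nat.exists_eq_add_of_le h
  rw [List.range_add, bindA]
  exact ⟨_, rfl⟩

variable (hfix : seqFlat f σΓ = σΓ) (hne : ∀ i, 1 ≤ lenf f σΓ i)

include hfix hne in
theorem sigma_getD (N x : ℕ) (hx : x < bfun (lenf f σΓ) N) :
    σΓ x = ((List.range N).flatMap fun i => f (σΓ i)).getD x (σΓ 0) := by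
  have hval : σΓ x = ((List.range (x+1)).flatMap fun i => f (σΓ i)).getD x (σΓ 0) := by
    conv_lhs => rw [← hfix]
    rfl
  rcases le_total N (x + 1) with h | h
  · obtain ⟨l, hl⟩ := flat_prefix f σΓ (x+1) N h
    rw [hval, hl, List.getD_append]
    rw [flat_length]; exact hx
  · obtain ⟨l, hl⟩ := flat_prefix f σΓ N (x+1) h
    rw [hval, hl, List.getD_append]
    rw [flat_length]
    exact lt_of_lt_of_le (Nat.lt_succ_self x) (self_le_bfun hne (x+1))

include hfix hne in
/-- The word of `σΓ` on block `i` is `f (σΓ i)`. -/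
theorem wrd_block (i : ℕ) :
    wrd σΓ (bfun (lenf f σΓ) i) (lenf f σΓ i) = f (σΓ i) := by
  apply List.ext_getElem
  · simp [wrd_length, lenf]
  · intro j h1 h2
    rw [wrd_length] at h1
    have hx : bfun (lenf f σΓ) i + j < bfun (lenf f σΓ) (i+1) := by
      simp only [bfun]; omega
    have := sigma_getD f σΓ hfix hne (i+1) (bfun (lenf f σΓ) i + j) hx
    rw [List.range_succ, bindA] at this
    rw [List.getD_append_right _ _ _ _ (by rw [flat_length]; omega)] at this
    rw [flat_length] at this
    simp only [Nat.add_sub_cancel_left, bindS] at this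
    rw [List.getD_eq_getElem _ _ (by simpa [lenf] using h1)] at this
    have hw : (wrd σΓ (bfun (lenf f σΓ) i) (lenf f σΓ i))[j] =
        σΓ (bfun (lenf f σΓ) i + j) := by simp [wrd]
    rw [hw, this]
    rfl

include hfix hne in
theorem chunk : ∀ d L, (wrd σΓ L d).flatMap f =
    wrd σΓ (bfun (lenf f σΓ) L) (bfun (lenf f σΓ) (L + d) - bfun (lenf f σΓ) L) := by
  intro d
  induction d with
  | zero => intro L; simp [wrd]
  | succ d ih =>
    intro L
    have hmono := (bfun_strictMono hne).monotone
    have h1 : bfun (lenf f σΓ) L ≤ bfun (lenf f σΓ) (L + d) := hmono (by omega)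
    rw [show wrd σΓ L (d+1) = wrd σΓ L d ++ [σΓ (L + d)] by
      rw [wrd, wrd, List.range_succ, List.map_append]; rfl]
    rw [bindA, ih L, bindS,
      ← wrd_block f σΓ hfix hne (L + d)]
    have h2 : bfun (lenf f σΓ) L + (bfun (lenf f σΓ) (L + d) - bfun (lenf f σΓ) L)
        = bfun (lenf f σΓ) (L + d) := by omega
    have hw := wrd_append σΓ (bfun (lenf f σΓ) L) (bfun (lenf f σΓ) (L+d) - bfun (lenf f σΓ) L) (lenf f σΓ (L+d))
    rw [h2] at hw
    rw [hw]
    congr 1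
    have : bfun (lenf f σΓ) (L + (d+1)) = bfun (lenf f σΓ) (L + d) + lenf f σΓ (L + d) := by
      rw [show L + (d+1) = (L+d) + 1 by omega]; rfl
    omega

end Words


end MorphicAux

namespace MorphicAux

section Depth

variable {Γ : Type*} (f : Γ → List Γ) (σΓ : ℕ → Γ)

/-- Start of the depth-`k` descendant block of node `n`. -/
def Bk (k n : ℕ) : ℕ := (bfun (lenf f σΓ))^[k] n

/-- The word of labels of the depth-`k` descendant block of `n`. -/
def Wk (k n : ℕ) : List Γ := wrd σΓ (Bk f σΓ k n) (Bk f σΓ k (n+1) - Bk f σΓ k n)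

variable (hfix : seqFlat f σΓ = σΓ) (hne : ∀ i, 1 ≤ lenf f σΓ i)

theorem Bk_zero (n : ℕ) : Bk f σΓ 0 n = n := rfl

include hne in
theorem Bk_mono (k : ℕ) : Monotone (Bk f σΓ k) := (bfun_strictMono hne).monotone.iterate k

include hne in
theorem Bk_strictMono (k : ℕ) : StrictMono (Bk f σΓ k) := (bfun_strictMono hne).iterate k

theorem Bk_succ (k n : ℕ) : Bk f σΓ (k+1) n = bfun (lenf f σΓ) (Bk f σΓ k n) :=
  Function.iterate_succ_apply' _ k n

theorem Bk_succ' (k n : ℕ) : Bk f σΓ (k+1) n = Bk f σΓ k (bfun (lenf f σΓ) n) :=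
  Function.iterate_succ_apply _ k n

include hne in
theorem Bk_le_succ (k n : ℕ) : Bk f σΓ k n ≤ Bk f σΓ (k+1) n := by
  rw [Bk_succ']
  exact Bk_mono f σΓ hne k (self_le_bfun hne n)

include hne in
theorem Bk_mono_k {k k' : ℕ} (h : k ≤ k') (n : ℕ) : Bk f σΓ k n ≤ Bk f σΓ k' n := by
  induction k' with
  | zero => simp_all
  | succ k' ih =>
    rcases Nat.eq_or_lt_of_le h with rfl | h'
    · exact le_rfl
    · exact (ih (by omega)).trans (Bk_le_succ f σΓ hne k' n)

variable (h2 : 2 ≤ lenf f σΓ 0)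

include hne h2 in
theorem block_order {m : ℕ} (hm : 1 ≤ m) (k : ℕ) :
    Bk f σΓ k (m+1) ≤ Bk f σΓ (k+1) m := by
  rw [Bk_succ']
  exact Bk_mono f σΓ hne k (lt_bfun hne h2 m hm)

include hne h2 in
theorem block_lt {m : ℕ} (hm : 1 ≤ m) {k k' : ℕ} (h : k < k') :
    Bk f σΓ k (m+1) ≤ Bk f σΓ k' m :=
  (block_order f σΓ hne h2 hm k).trans (Bk_mono_k f σΓ hne h m)

include hne h2 in
theorem depth_unique {m : ℕ} (hm : 1 ≤ m) {x k k' : ℕ}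
    (h : (Pfun (lenf f σΓ))^[k] x = m) (h' : (Pfun (lenf f σΓ))^[k'] x = m) : k = k' := by
  by_contra hkk
  rcases Nat.lt_or_ge k k' with hlt | hge
  · have h1 := (Pfun_iterate hne k x m).1 h
    have h2' := (Pfun_iterate hne k' x m).1 h'
    have := block_lt f σΓ hne h2 hm hlt
    change (bfun (lenf f σΓ))^[k] (m+1) ≤ (bfun (lenf f σΓ))^[k'] m at this
    omega
  · have hlt : k' < k := by omega
    have h1 := (Pfun_iterate hne k' x m).1 h'
    have h2' := (Pfun_iterate hne k x m).1 h
    have := block_lt f σΓ hne h2 hm hlt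
    change (bfun (lenf f σΓ))^[k'] (m+1) ≤ (bfun (lenf f σΓ))^[k] m at this
    omega

include hfix hne in
theorem Wk_succ (k n : ℕ) : Wk f σΓ (k+1) n = (Wk f σΓ k n).flatMap f := by
  have hle : Bk f σΓ k n ≤ Bk f σΓ k (n+1) := Bk_mono f σΓ hne k (by omega)
  have hLd : Bk f σΓ k n + (Bk f σΓ k (n+1) - Bk f σΓ k n) = Bk f σΓ k (n+1) := by omega
  rw [Wk, Wk, chunk f σΓ hfix hne _ (Bk f σΓ k n), hLd, ← Bk_succ, ← Bk_succ]

include hfix hne in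
theorem Wk_congr {m n : ℕ} (hmn : σΓ m = σΓ n) : ∀ k, Wk f σΓ k m = Wk f σΓ k n := by
  intro k
  induction k with
  | zero =>
    have h1 : ∀ p : ℕ, Wk f σΓ 0 p = [σΓ p] := by
      intro p
      rw [Wk, Bk_zero, Bk_zero, Nat.add_sub_cancel_left, wrd]
      rfl
    rw [h1, h1, hmn]
  | succ k ih => rw [Wk_succ f σΓ hfix hne, Wk_succ f σΓ hfix hne, ih]

include hfix hne in
theorem Dk_eq {m n : ℕ} (hmn : σΓ m = σΓ n) (k : ℕ) :
    Bk f σΓ k (m+1) - Bk f σΓ k m = Bk f σΓ k (n+1) - Bk f σΓ k n := by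
  have := congrArg List.length (Wk_congr f σΓ hfix hne hmn k)
  rwa [Wk, Wk, wrd_length, wrd_length] at this

include hfix hne in
theorem label_eq {m n : ℕ} (hmn : σΓ m = σΓ n) (k : ℕ) {t : ℕ}
    (ht : t < Bk f σΓ k (m+1) - Bk f σΓ k m) :
    σΓ (Bk f σΓ k m + t) = σΓ (Bk f σΓ k n + t) := by
  have hW := Wk_congr f σΓ hfix hne hmn k
  have h1 := wrd_getD σΓ (Bk f σΓ k m) (Bk f σΓ k (m+1) - Bk f σΓ k m) t ht (σΓ 0)
  have h2 := wrd_getD σΓ (Bk f σΓ k n) (Bk f σΓ k (n+1) - Bk f σΓ k n) t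
    (by rwa [← Dk_eq f σΓ hfix hne hmn k]) (σΓ 0)
  rw [← h1, ← h2, Wk, Wk] at *
  rw [hW]

include hfix hne in
/-- Partial sums of block lengths agree below equal labels. -/
theorem bsum_eq {m n : ℕ} (hmn : σΓ m = σΓ n) (k : ℕ) {s : ℕ}
    (hs : s ≤ Bk f σΓ k (m+1) - Bk f σΓ k m) :
    bfun (lenf f σΓ) (Bk f σΓ k m + s) + bfun (lenf f σΓ) (Bk f σΓ k n)
      = bfun (lenf f σΓ) (Bk f σΓ k n + s) + bfun (lenf f σΓ) (Bk f σΓ k m) := by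
  rw [bfun_shift (Bk f σΓ k m) s, bfun_shift (Bk f σΓ k n) s]
  have hsum : ∑ j ∈ Finset.range s, lenf f σΓ (Bk f σΓ k m + j)
      = ∑ j ∈ Finset.range s, lenf f σΓ (Bk f σΓ k n + j) := by
    apply Finset.sum_congr rfl
    intro j hj
    rw [Finset.mem_range] at hj
    rw [lenf, lenf, label_eq f σΓ hfix hne hmn k (by omega)]
  omega

end Depth

end MorphicAux

namespace MorphicAux

section Equiv

variable {Γ : Type*} (f : Γ → List Γ) (σΓ : ℕ → Γ)
  (hfix : seqFlat f σΓ = σΓ) (hne : ∀ i, 1 ≤ lenf f σΓ i) (h2 : 2 ≤ lenf f σΓ 0)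

include hne in
theorem mem_SP_iff {m x : ℕ} : x ∈ SP (Pfun (lenf f σΓ)) m ↔
    ∃ k, Bk f σΓ k m ≤ x ∧ x < Bk f σΓ k (m+1) := by
  constructor
  · rintro ⟨k, hk⟩; exact ⟨k, (Pfun_iterate hne k x m).1 hk⟩
  · rintro ⟨k, hk⟩; exact ⟨k, (Pfun_iterate hne k x m).2 hk⟩

open Classical in
/-- The canonical map between the subtree of `m` and the subtree of `n`. -/
noncomputable def phi (m n : ℕ) (x : ℕ) : ℕ :=
  if h : ∃ k, (Pfun (lenf f σΓ))^[k] x = m then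
    Bk f σΓ (Nat.find h) n + (x - Bk f σΓ (Nat.find h) m)
  else 0

include hne h2 in
theorem phi_spec {m : ℕ} (hm : 1 ≤ m) (n : ℕ) {x k : ℕ}
    (h1 : Bk f σΓ k m ≤ x) (h2' : x < Bk f σΓ k (m+1)) :
    phi f σΓ m n x = Bk f σΓ k n + (x - Bk f σΓ k m) := by
  classical
  have hmem : ∃ k', (Pfun (lenf f σΓ))^[k'] x = m := ⟨k, (Pfun_iterate hne k x m).2 ⟨h1, h2'⟩⟩
  rw [phi, dif_pos hmem]
  have hk : Nat.find hmem = k :=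
    depth_unique f σΓ hne h2 hm (Nat.find_spec hmem) ((Pfun_iterate hne k x m).2 ⟨h1, h2'⟩)
  rw [hk]

include hfix hne h2 in
theorem labelled_equiv {m n : ℕ} (hm : 1 ≤ m) (hn : 1 ≤ n) (hmn : σΓ m = σΓ n) :
    Set.BijOn (phi f σΓ m n) (SP (Pfun (lenf f σΓ)) m) (SP (Pfun (lenf f σΓ)) n) ∧
    StrictMonoOn (phi f σΓ m n) (SP (Pfun (lenf f σΓ)) m) ∧
    phi f σΓ m n m = n ∧
    (∀ x ∈ SP (Pfun (lenf f σΓ)) m, x ≠ m →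
      phi f σΓ m n (Pfun (lenf f σΓ) x) = Pfun (lenf f σΓ) (phi f σΓ m n x)) ∧
    (∀ x ∈ SP (Pfun (lenf f σΓ)) m, σΓ (phi f σΓ m n x) = σΓ x) := by
  set ℓ := lenf f σΓ with hℓdef
  set φ := phi f σΓ m n with hφdef
  -- membership in depth-k blocks
  have hDk := Dk_eq f σΓ hfix hne hmn
  have hBmono : ∀ k, Monotone (Bk f σΓ k) := Bk_mono f σΓ hne
  have hBsm : ∀ k, StrictMono (Bk f σΓ k) := Bk_strictMono f σΓ hne
  -- φ maps the depth-k block of m into the depth-k block of n, preserving offset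
  have key : ∀ {x k}, Bk f σΓ k m ≤ x → x < Bk f σΓ k (m+1) →
      φ x = Bk f σΓ k n + (x - Bk f σΓ k m) ∧
      Bk f σΓ k n ≤ φ x ∧ φ x < Bk f σΓ k (n+1) := by
    intro x k h1 h2'
    have hs := phi_spec f σΓ hne h2 hm n h1 h2'
    rw [← hφdef] at hs
    refine ⟨hs, by omega, ?_⟩
    have hD := hDk k
    have h3 : Bk f σΓ k n ≤ Bk f σΓ k (n+1) := hBmono k (by omega)
    have h4 : Bk f σΓ k m ≤ Bk f σΓ k (m+1) := hBmono k (by omega)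
    omega
  -- strict monotonicity
  have hmono : StrictMonoOn φ (SP (Pfun ℓ) m) := by
    intro x hx y hy hxy
    obtain ⟨kx, hx1, hx2⟩ := (mem_SP_iff f σΓ hne).1 hx
    obtain ⟨ky, hy1, hy2⟩ := (mem_SP_iff f σΓ hne).1 hy
    have hkxy : kx ≤ ky := by
      by_contra hc
      have : Bk f σΓ ky (m+1) ≤ Bk f σΓ kx m := block_lt f σΓ hne h2 hm (by omega)
      omega
    rcases Nat.eq_or_lt_of_le hkxy with rfl | hlt
    · have h1 := (key hx1 hx2).1
      have h2' := (key hy1 hy2).1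
      omega
    · have h1 := (key hx1 hx2).2.2
      have h2' := (key hy1 hy2).2.1
      have h3 : Bk f σΓ kx (n+1) ≤ Bk f σΓ ky n := block_lt f σΓ hne h2 hn hlt
      omega
  constructor
  · refine ⟨?_, hmono.injOn, ?_⟩
    · intro x hx
      obtain ⟨k, h1, h2'⟩ := (mem_SP_iff f σΓ hne).1 hx
      exact (mem_SP_iff f σΓ hne).2 ⟨k, (key h1 h2').2.1, (key h1 h2').2.2⟩
    · intro y hy
      obtain ⟨k, h1, h2'⟩ := (mem_SP_iff f σΓ hne).1 hy
      have hD := hDk k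
      have h4 : Bk f σΓ k m ≤ Bk f σΓ k (m+1) := hBmono k (by omega)
      refine ⟨Bk f σΓ k m + (y - Bk f σΓ k n), ?_, ?_⟩
      · exact (mem_SP_iff f σΓ hne).2 ⟨k, by omega, by omega⟩
      · have := (key (x := Bk f σΓ k m + (y - Bk f σΓ k n)) (k := k)
          (by omega) (by omega)).1
        omega
  refine ⟨hmono, ?_, ?_, ?_⟩
  · have := (key (x := m) (k := 0) (le_refl m) (by rw [Bk_zero]; omega)).1
    rw [Bk_zero, Bk_zero] at this
    omega
  · -- commutation with the parent function
    intro x hx hxm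
    obtain ⟨k, h1, h2'⟩ := (mem_SP_iff f σΓ hne).1 hx
    rcases Nat.eq_zero_or_pos k with rfl | hk
    · rw [Bk_zero] at h1; rw [Bk_zero] at h2'; omega
    obtain ⟨k', rfl⟩ : ∃ k', k = k' + 1 := ⟨k - 1, by omega⟩
    -- the parent of x sits in the depth-k' block
    have hxSP : (Pfun ℓ)^[k'+1] x = m := (Pfun_iterate hne (k'+1) x m).2 ⟨h1, h2'⟩
    have hPx : (Pfun ℓ)^[k'] (Pfun ℓ x) = m := by
      rw [← Function.iterate_succ_apply]; exact hxSP
    obtain ⟨hp1, hp2⟩ := (Pfun_iterate hne k' (Pfun ℓ x) m).1 hPx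
    have hp1 : Bk f σΓ k' m ≤ Pfun ℓ x := hp1
    have hp2 : Pfun ℓ x < Bk f σΓ k' (m+1) := hp2
    -- basic facts about P x
    have hbx : bfun ℓ (Pfun ℓ x) ≤ x ∧ x < bfun ℓ (Pfun ℓ x + 1) := (Pfun_eq_iff hne).1 rfl
    set i := Pfun ℓ x with hidef
    set s := i - Bk f σΓ k' m with hsdef
    have his : i = Bk f σΓ k' m + s := by omega
    have hsD : s < Bk f σΓ k' (m+1) - Bk f σΓ k' m := by omega
    -- partial-sum equalities
    have hb1 := bsum_eq f σΓ hfix hne hmn k' (s := s) (by omega)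
    have hb2 := bsum_eq f σΓ hfix hne hmn k' (s := s+1) (by omega)
    rw [← hℓdef] at hb1 hb2
    have hBk1 : Bk f σΓ (k'+1) m = bfun ℓ (Bk f σΓ k' m) := Bk_succ f σΓ k' m
    have hBk1' : Bk f σΓ (k'+1) n = bfun ℓ (Bk f σΓ k' n) := Bk_succ f σΓ k' n
    have hφx := (key h1 h2').1
    have hD := hDk (k'+1)
    -- monotone facts for omega
    have hm1 : bfun ℓ (Bk f σΓ k' m) ≤ bfun ℓ (Bk f σΓ k' m + s) :=
      (bfun_strictMono hne).monotone (by omega)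
    have hm2 : bfun ℓ (Bk f σΓ k' n) ≤ bfun ℓ (Bk f σΓ k' n + s) :=
      (bfun_strictMono hne).monotone (by omega)
    have hm3 : bfun ℓ (Bk f σΓ k' m + s) ≤ bfun ℓ (Bk f σΓ k' m + (s+1)) :=
      (bfun_strictMono hne).monotone (by omega)
    have hadd1 : Bk f σΓ k' m + (s+1) = i + 1 := by omega
    -- value of φ (P x)
    have hφP : φ (Pfun ℓ x) = Bk f σΓ k' n + s := by
      have := (key (x := Pfun ℓ x) (k := k') hp1 hp2).1
      omega
    -- value of P (φ x)
    have hPφ : Pfun ℓ (φ x) = Bk f σΓ k' n + s := by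
      rw [Pfun_eq_iff hne]
      constructor
      · -- bfun ℓ (Bk k' n + s) ≤ φ x
        rw [← his] at hb1
        rw [← his] at hm1
        omega
      · rw [show Bk f σΓ k' n + s + 1 = Bk f σΓ k' n + (s+1) by omega]
        rw [hadd1] at hb2
        omega
    rw [hφP, hPφ]
  · -- labels are preserved
    intro x hx
    obtain ⟨k, h1, h2'⟩ := (mem_SP_iff f σΓ hne).1 hx
    have hφx := (key h1 h2').1
    have hlab := label_eq f σΓ hfix hne hmn k (t := x - Bk f σΓ k m) (by omega)
    rw [hφx, ← hlab]
    congr 1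
    omega

end Equiv

end MorphicAux

namespace MorphicAux

section Final

variable {Γ : Type*} (f : Γ → List Γ) (σΓ : ℕ → Γ)
  (hfix : seqFlat f σΓ = σΓ) (hne : ∀ i, 1 ≤ lenf f σΓ i) (h2 : 2 ≤ lenf f σΓ 0)

include hne h2 in
theorem Pfun_lt_self {x : ℕ} (hx : 1 ≤ x) : Pfun (lenf f σΓ) x < x := by
  have h := (Pfun_eq_iff hne (x := x)).1 rfl
  by_contra hc
  have h1 : x ≤ Pfun (lenf f σΓ) x := by omega
  have h3 := lt_bfun hne h2 x hx
  have h4 := (bfun_strictMono hne).monotone h1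
  omega

include hne h2 in
theorem SP_zero : SP (Pfun (lenf f σΓ)) 0 = Set.univ := by
  ext x
  simp only [Set.mem_univ, iff_true]
  induction x using Nat.strong_induction_on with
  | _ x ih =>
    rcases Nat.eq_zero_or_pos x with rfl | hx
    · exact ⟨0, rfl⟩
    · obtain ⟨k, hk⟩ := ih _ (Pfun_lt_self f σΓ hne h2 hx)
      exact ⟨k + 1, by rwa [Function.iterate_succ_apply]⟩

include hne h2 in
theorem SP_infinite (n : ℕ) : (SP (Pfun (lenf f σΓ)) n).Infinite := by
  rcases Nat.eq_zero_or_pos n with rfl | hn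
  · rw [SP_zero f σΓ hne h2]; exact Set.infinite_univ
  · refine Set.infinite_of_injective_forall_mem
      (f := fun k : ℕ => Bk f σΓ k n) ?_ ?_
    · have : StrictMono fun k : ℕ => Bk f σΓ k n := by
        apply strictMono_nat_of_lt_succ
        intro k
        exact lt_of_lt_of_le (Bk_strictMono f σΓ hne k (by omega))
          (block_order f σΓ hne h2 hn k)
      exact this.injective
    · intro k
      exact (mem_SP_iff f σΓ hne).2 ⟨k, le_rfl, Bk_strictMono f σΓ hne k (by omega)⟩

theorem nth_transfer {S T : Set ℕ} (hS : S.Infinite) (hT : T.Infinite) {φ : ℕ → ℕ}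
    (hbij : Set.BijOn φ S T) (hmono : StrictMonoOn φ S) (i : ℕ) :
    Nat.nth (· ∈ T) i = φ (Nat.nth (· ∈ S) i) := by
  have hS' : (setOf (· ∈ S)).Infinite := by exact hS
  have hT' : (setOf (· ∈ T)).Infinite := by exact hT
  have hg : StrictMono (fun i => φ (Nat.nth (· ∈ S) i)) := by
    intro i j hij
    exact hmono (Nat.nth_mem_of_infinite hS' i) (Nat.nth_mem_of_infinite hS' j)
      (Nat.nth_strictMono hS' hij)
  have hrange : Set.range (fun i => φ (Nat.nth (· ∈ S) i)) = Set.range (Nat.nth (· ∈ T)) := by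
    rw [Nat.range_nth_of_infinite hT', Set.setOf_mem_eq]
    have : Set.range (fun i => φ (Nat.nth (· ∈ S) i)) = φ '' Set.range (Nat.nth (· ∈ S)) := by
      rw [← Set.range_comp]; rfl
    rw [this, Nat.range_nth_of_infinite hS', Set.setOf_mem_eq]
    exact hbij.image_eq
  have heq := ((Nat.nth_strictMono hT').range_inj hg).1 hrange.symm
  exact congrFun heq i

end Final

end MorphicAux

theorem dummy_ph4 : True := trivial


/-- Every morphic sequence `σ = τ(f^∞(a))` admits a rational tree function `P`
such that the set of subsequences `{ σ^{S_P(n)} | n ∈ ℕ }` is finite. -/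
theorem morphic_finitely_many_subsequences {A Γ : Type} [Fintype A] [Fintype Γ]
    (f : Γ → List Γ) (τ : Γ → A) (a : Γ) (u : List Γ)
    (hne : ∀ b : Γ, f b ≠ []) (hu : u ≠ []) (hfa : f a = a :: u)
    (σΓ : ℕ → Γ) (hσ0 : σΓ 0 = a) (hfix : seqFlat f σΓ = σΓ)
    (σ : ℕ → A) (hσ : σ = fun n => τ (σΓ n)) :
    ∃ P : ℕ → ℕ, P 0 = 0 ∧
      (∀ n, 1 ≤ n → P n ≤ P (n + 1)) ∧
      (∀ m : ℕ, ∃ n, 1 ≤ n ∧ P n = m) ∧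
      RationalTree P ∧
      (Set.range fun n : ℕ => subseq σ (SP P n)).Finite := by
  classical
  set ℓ := MorphicAux.lenf f σΓ with hℓdef
  have hℓ : ∀ i, 1 ≤ ℓ i := by
    intro i
    have := hne (σΓ i)
    have : 0 < (f (σΓ i)).length := List.length_pos_iff.2 this
    exact this
  have h2 : 2 ≤ ℓ 0 := by
    have h3 : 0 < u.length := List.length_pos_iff.2 hu
    simp only [hℓdef, MorphicAux.lenf, hσ0, hfa, List.length_cons]
    omega
  set P := MorphicAux.Pfun ℓ with hPdef
  -- the labelled equivalence combined with nth-transfer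
  have hequiv : ∀ m n : ℕ, 1 ≤ m → 1 ≤ n → σΓ m = σΓ n →
      treeEquiv P m n ∧ subseq σ (SP P m) = subseq σ (SP P n) := by
    intro m n hm hn hmn
    obtain ⟨hbij, hmono, hm0, hcomm, hlab⟩ :=
      MorphicAux.labelled_equiv f σΓ hfix hℓ h2 hm hn hmn
    refine ⟨⟨_, hbij, hmono, hm0, hcomm⟩, ?_⟩
    funext i
    have hSm := MorphicAux.SP_infinite f σΓ hℓ h2 m
    have hSn := MorphicAux.SP_infinite f σΓ hℓ h2 n
    rw [subseq, subseq, MorphicAux.nth_transfer hSm hSn hbij hmono i, hσ]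
    simp only
    congr 1
    have hS' : (setOf (· ∈ SP P m)).Infinite := by exact hSm
    exact (hlab _ (Nat.nth_mem_of_infinite hS' i)).symm
  -- the congruence through `Option Γ`
  set hfn : ℕ → Option Γ := fun n => if n = 0 then none else some (σΓ n) with hfndef
  have hcong : ∀ m n : ℕ, hfn m = hfn n →
      treeEquiv P m n ∧ subseq σ (SP P m) = subseq σ (SP P n) := by
    intro m n hmn
    rcases Nat.eq_zero_or_pos n with rfl | hn
    · have hm0 : m = 0 := by
        by_contra hc
        simp [hfndef, hc] at hmn
      subst hm0
      exact ⟨⟨id, Set.bijOn_id _, strictMonoOn_id, rfl, fun x _ _ => rfl⟩, rfl⟩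
    · have hm0 : m ≠ 0 := by
        intro hc
        subst hc
        simp [hfndef, Nat.pos_iff_ne_zero.1 hn] at hmn
      have hσmn : σΓ m = σΓ n := by
        simp only [hfndef, if_neg hm0, if_neg (Nat.pos_iff_ne_zero.1 hn)] at hmn
        exact Option.some_injective _ hmn
      exact hequiv m n (by omega) hn hσmn
  set rep : Option Γ → ℕ := fun o => if hc : ∃ n, hfn n = o then hc.choose else 0 with hrepdef
  have hrep : ∀ n : ℕ, hfn (rep (hfn n)) = hfn n := by
    intro n
    have hc : ∃ k, hfn k = hfn n := ⟨n, rfl⟩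
    simp only [hrepdef, dif_pos hc]
    exact hc.choose_spec
  refine ⟨P, ?_, ?_, ?_, ?_, ?_⟩
  · rfl
  · intro n _
    have h1 := ((MorphicAux.Pfun_eq_iff hℓ (x := n)).1 rfl).1
    exact (MorphicAux.bfun_le_iff hℓ).1 (le_trans h1 (by omega))
  · intro m
    rcases Nat.eq_zero_or_pos m with rfl | hm
    · refine ⟨1, le_rfl, ?_⟩
      rw [hPdef, MorphicAux.Pfun_eq_iff hℓ]
      have hb0 : MorphicAux.bfun ℓ 0 = 0 := rfl
      have hb1 : MorphicAux.bfun ℓ (0 + 1) = ℓ 0 := by simp [MorphicAux.bfun]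
      omega
    · refine ⟨MorphicAux.bfun ℓ m, ?_, ?_⟩
      · exact le_trans hm (MorphicAux.self_le_bfun hℓ m)
      · rw [hPdef, MorphicAux.Pfun_eq_iff hℓ]
        exact ⟨le_rfl, MorphicAux.bfun_strictMono hℓ (by omega)⟩
  · refine ⟨Finset.image rep Finset.univ, ?_⟩
    intro n
    refine ⟨rep (hfn n), Finset.mem_image_of_mem rep (Finset.mem_univ _), ?_⟩
    exact (hcong _ n (hrep n)).1
  · apply Set.Finite.subset (Set.finite_range fun o : Option Γ => subseq σ (SP P (rep o)))
    rintro _ ⟨n, rfl⟩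
    exact ⟨hfn n, (hcong _ n (hrep n)).2⟩
end

section
/- There exists a sequence σ over {0,1} and a tree function P : ℕ⁺ → ℕ (weakly monotone and surjective) such that the set { σ^{S_P(n)} | n ∈ ℕ } is finite (in fact has exactly two elements), but σ is not morphic. Hence rationality of the tree function cannot be dropped in the subsequence characterization of morphic sequences. -/
namespace NM

lemma seqFlat_def {Γ : Type*} (f : Γ → List Γ) (σ : ℕ → Γ) (n : ℕ) :
    seqFlat f σ n = ((List.range (n + 1)).flatMap fun i => f (σ i)).getD n (σ 0) := rfl

lemma length_le_flatMap {α β : Type*} (g : α → List β) (hg : ∀ x, g x ≠ []) :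
    ∀ l : List α, l.length ≤ (l.flatMap g).length := by
  intro l; induction l with
  | nil => simp
  | cons a l ih =>
    have h1 : 0 < (g a).length := List.length_pos_iff.mpr (hg a)
    simp only [List.flatMap_cons, List.length_append, List.length_cons]
    omega

lemma flatMap_range_long {Γ : Type*} (f : Γ → List Γ) (σ : ℕ → Γ) (a : Γ) (u : List Γ)
    (h0 : σ 0 = a) (hfa : f a = a :: u) (hu : u ≠ []) (hne : ∀ b, f b ≠ []) :
    ∀ n, 1 ≤ n → n + 1 ≤ ((List.range n).flatMap fun i => f (σ i)).length := by
  intro n hn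
  induction n with
  | zero => omega
  | succ m ih =>
    rcases Nat.eq_zero_or_pos m with rfl | hm
    · have : (List.range 1).flatMap (fun i => f (σ i)) = a :: u := by
        rw [show List.range 1 = [0] from rfl]
        simp [h0, hfa]
      rw [this]
      have := List.length_pos_iff.mpr hu
      simp only [List.length_cons]; omega
    · have := ih hm
      rw [List.range_succ, List.flatMap_append]
      have h2 : 0 < (f (σ m)).length := List.length_pos_iff.mpr (hne _)
      simp only [List.length_append, List.flatMap_cons, List.flatMap_nil, List.append_nil]
      omega

lemma seqFlat_eq_prefix {Γ : Type*} (f : Γ → List Γ) (σ : ℕ → Γ) (a : Γ) (u : List Γ)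
    (h0 : σ 0 = a) (hfa : f a = a :: u) (hu : u ≠ []) (hne : ∀ b, f b ≠ [])
    (n : ℕ) (hn : 1 ≤ n) :
    seqFlat f σ n = ((List.range n).flatMap fun i => f (σ i)).getD n (σ 0) := by
  rw [seqFlat_def, List.range_succ, List.flatMap_append]
  exact List.getD_append _ _ _ _
    (lt_of_lt_of_le (by omega) (flatMap_range_long f σ a u h0 hfa hu hne n hn))

lemma fixedPoint_unique {Γ : Type*} (f : Γ → List Γ) (a : Γ) (u : List Γ)
    (hfa : f a = a :: u) (hu : u ≠ []) (hne : ∀ b, f b ≠ [])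
    (σ σ' : ℕ → Γ) (h0 : σ 0 = a) (h0' : σ' 0 = a)
    (hσ : seqFlat f σ = σ) (hσ' : seqFlat f σ' = σ') : σ = σ' := by
  funext n
  induction n using Nat.strong_induction_on with
  | _ n ih =>
    rcases Nat.eq_zero_or_pos n with rfl | hn
    · rw [h0, h0']
    · have e1 : σ n = ((List.range n).flatMap fun i => f (σ i)).getD n (σ 0) := by
        conv_lhs => rw [← hσ]
        exact seqFlat_eq_prefix f σ a u h0 hfa hu hne n hn
      have e2 : σ' n = ((List.range n).flatMap fun i => f (σ' i)).getD n (σ' 0) := by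
        conv_lhs => rw [← hσ']
        exact seqFlat_eq_prefix f σ' a u h0' hfa hu hne n hn
      have hl : ((List.range n).flatMap fun i => f (σ i))
          = (List.range n).flatMap fun i => f (σ' i) := by
        rw [List.flatMap_def, List.flatMap_def]
        congr 1
        exact List.map_congr_left fun i hi => by rw [ih i (List.mem_range.mp hi)]
      rw [e1, e2, hl, h0, h0']

def MorphicSet : Set (ℕ → ℕ) :=
  {x | ∃ (Γ : Type) (_ : Fintype Γ) (f : Γ → List Γ) (τ : Γ → ℕ) (a : Γ)
      (u : List Γ) (σΓ : ℕ → Γ),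
      (∀ b : Γ, f b ≠ []) ∧ f a = a :: u ∧ u ≠ [] ∧ σΓ 0 = a ∧
      seqFlat f σΓ = σΓ ∧ x = fun n => τ (σΓ n)}

lemma seqFlat_equiv {Γ Δ : Type*} (e : Γ ≃ Δ) (f : Γ → List Γ) (σ : ℕ → Γ) (n : ℕ) :
    seqFlat (fun d => (f (e.symm d)).map e) (fun k => e (σ k)) n = e (seqFlat f σ n) := by
  rw [seqFlat_def, seqFlat_def]
  simp only [Equiv.symm_apply_apply]
  rw [← List.map_flatMap]
  rw [List.getD_eq_getElem?_getD, List.getD_eq_getElem?_getD, List.getElem?_map,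
    Option.getD_map]

lemma morphicSet_countable : MorphicSet.Countable := by
  have main : MorphicSet ⊆ ⋃ (i : Σ k : ℕ, (Fin k → List (Fin k)) × (Fin k → ℕ) × Fin k),
      {x | ∃ σΓ : ℕ → Fin i.1, (∀ b, i.2.1 b ≠ []) ∧
        (∃ u, i.2.1 i.2.2.2 = i.2.2.2 :: u ∧ u ≠ []) ∧ σΓ 0 = i.2.2.2 ∧
        seqFlat i.2.1 σΓ = σΓ ∧ x = fun n => i.2.2.1 (σΓ n)} := by
    rintro x ⟨Γ, inst, f, τ, a, u, σΓ, hne, hfa, hu, h0, hfix, rfl⟩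
    classical
    let e : Γ ≃ Fin (Fintype.card Γ) := @Fintype.equivFin Γ inst
    refine Set.mem_iUnion.mpr ⟨⟨Fintype.card Γ, fun d => (f (e.symm d)).map e,
      fun d => τ (e.symm d), e a⟩, ?_⟩
    refine ⟨fun k => e (σΓ k), ?_, ⟨u.map e, ?_, ?_⟩, ?_, ?_, ?_⟩
    · intro b
      rw [Ne, List.map_eq_nil_iff]
      exact hne _
    · simp only [Equiv.symm_apply_apply]
      rw [hfa]; simp
    · simp [hu]
    · simp [h0]
    · funext k
      rw [seqFlat_equiv e f σΓ k, congrFun hfix k]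
    · funext k; simp
  apply Set.Countable.mono main
  apply Set.countable_iUnion
  intro i
  apply Set.Subsingleton.countable
  rintro x ⟨σ1, hne, ⟨u, hfa, hu⟩, h01, hfix1, rfl⟩ x' ⟨σ2, _, ⟨u', hfa', hu'⟩, h02, hfix2, rfl⟩
  rw [fixedPoint_unique _ _ u hfa hu hne σ1 σ2 h01 h02 hfix1 hfix2]

end NM

namespace NM

/-! ### The construction -/

variable (y : ℕ → Bool)

/-- level sizes of the attached tree -/
def nn (m : ℕ) : ℕ := 1 + 2 * m + ∑ i ∈ Finset.range m, (cond (y i) 1 0)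

lemma nn_zero : nn y 0 = 1 := by simp [nn]

lemma nn_succ (m : ℕ) : nn y (m + 1) = nn y m + 2 + cond (y m) 1 0 := by
  simp only [nn, Finset.sum_range_succ]; ring

lemma nn_pos (m : ℕ) : 1 ≤ nn y m := by simp [nn]; omega

lemma nn_mono : Monotone (nn y) := by
  apply monotone_nat_of_le_succ
  intro m
  rw [nn_succ]; omega

/-- number of `0`s on level `m` -/
def bl (m : ℕ) : ℕ := ∑ i ∈ Finset.range m, nn y i

lemma bl_zero : bl y 0 = 0 := rfl

lemma bl_succ (m : ℕ) : bl y (m + 1) = bl y m + nn y m := Finset.sum_range_succ _ _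

lemma bl_one : bl y 1 = 1 := by rw [bl_succ, bl_zero, nn_zero]

lemma bl_strict : StrictMono (bl y) := by
  apply strictMono_nat_of_lt_succ
  intro m
  have := nn_pos y m
  rw [bl_succ]; omega

lemma bl_mono : Monotone (bl y) := (bl_strict y).monotone

lemma bl_ge (m : ℕ) : m ≤ bl y m := (bl_strict y).le_apply

lemma bl_pos (m : ℕ) (hm : 1 ≤ m) : 1 ≤ bl y m := by
  have := (bl_mono y) hm
  rw [bl_one] at this; omega

/-- start position of level `m` -/
def Ls (m : ℕ) : ℕ := ∑ ℓ ∈ Finset.range m, (1 + bl y ℓ)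

lemma Ls_zero : Ls y 0 = 0 := rfl

lemma Ls_succ (m : ℕ) : Ls y (m + 1) = Ls y m + 1 + bl y m := by
  rw [Ls, Finset.sum_range_succ, Ls]; omega

lemma Ls_one : Ls y 1 = 1 := by rw [Ls_succ, Ls_zero, bl_zero]

lemma Ls_strict : StrictMono (Ls y) := by
  apply strictMono_nat_of_lt_succ
  intro m
  rw [Ls_succ]; omega

lemma Ls_ge (m : ℕ) : m ≤ Ls y m := (Ls_strict y).le_apply


/-- the level of position `p` -/
def lev (p : ℕ) : ℕ := Nat.findGreatest (fun m => Ls y m ≤ p) p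

lemma Ls_lev_le (p : ℕ) : Ls y (lev y p) ≤ p :=
  Nat.findGreatest_spec (P := fun m => Ls y m ≤ p) (Nat.zero_le p)
    (by show Ls y 0 ≤ p; rw [Ls_zero]; exact Nat.zero_le p)

lemma lev_le (p : ℕ) : lev y p ≤ p := Nat.findGreatest_le p

lemma lt_Ls_lev_succ (p : ℕ) : p < Ls y (lev y p + 1) := by
  by_contra h
  push_neg at h
  rcases le_or_gt (lev y p + 1) p with h2 | h2
  · exact Nat.findGreatest_is_greatest (Nat.lt_succ_self _) h2 h
  · have h3 := lev_le y p
    have h4 : p = lev y p := by omega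
    have := Ls_ge y (lev y p + 1)
    omega

lemma lev_eq_of (p m : ℕ) (h1 : Ls y m ≤ p) (h2 : p < Ls y (m + 1)) : lev y p = m := by
  have hle : m ≤ lev y p := Nat.le_findGreatest (le_trans (Ls_ge y m) h1) h1
  rcases Nat.lt_or_ge (lev y p) m with h3 | h3
  · omega
  · rcases Nat.eq_or_lt_of_le h3 with h4 | h4
    · omega
    · exfalso
      have : Ls y (m + 1) ≤ Ls y (lev y p) := (Ls_strict y).monotone h4
      have := Ls_lev_le y p
      omega

lemma lev_encode (m t : ℕ) (ht : t ≤ bl y m) : lev y (Ls y m + t) = m := by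
  apply lev_eq_of
  · omega
  · rw [Ls_succ]; omega

/-- the slot of position `p` within its level -/
def slot (p : ℕ) : ℕ := p - Ls y (lev y p)

lemma slot_encode (m t : ℕ) (ht : t ≤ bl y m) : slot y (Ls y m + t) = t := by
  rw [slot, lev_encode y m t ht]; omega

lemma decomp (p : ℕ) : p = Ls y (lev y p) + slot y p := by
  have := Ls_lev_le y p; rw [slot]; omega

lemma slot_le (p : ℕ) : slot y p ≤ bl y (lev y p) := by
  have h1 := lt_Ls_lev_succ y p
  rw [Ls_succ] at h1
  have := Ls_lev_le y p
  rw [slot]; omega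

lemma lev_zero : lev y 0 = 0 := by
  have := lev_le y 0; omega

lemma slot_zero : slot y 0 = 0 := by
  rw [slot, lev_zero, Ls_zero]

lemma lev_pos (p : ℕ) (hp : 1 ≤ p) : 1 ≤ lev y p :=
  Nat.le_findGreatest hp (by rw [Ls_one]; exact hp)

/-- the chunk of a `0`-slot `z` within its level -/
def chk (z : ℕ) : ℕ := Nat.findGreatest (fun i => bl y i ≤ z) z

lemma bl_chk_le (z : ℕ) : bl y (chk y z) ≤ z :=
  Nat.findGreatest_spec (P := fun i => bl y i ≤ z) (Nat.zero_le z)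
    (by show bl y 0 ≤ z; rw [bl_zero]; exact Nat.zero_le z)

lemma chk_le (z : ℕ) : chk y z ≤ z := Nat.findGreatest_le z

lemma lt_bl_chk_succ (z : ℕ) : z < bl y (chk y z + 1) := by
  by_contra h
  push_neg at h
  rcases le_or_gt (chk y z + 1) z with h2 | h2
  · exact Nat.findGreatest_is_greatest (Nat.lt_succ_self _) h2 h
  · have h3 := chk_le y z
    have h4 : z = chk y z := by omega
    have := bl_ge y (chk y z + 1)
    omega

lemma chk_eq_of (z i : ℕ) (h1 : bl y i ≤ z) (h2 : z < bl y (i + 1)) : chk y z = i := by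
  have hle : i ≤ chk y z := Nat.le_findGreatest (le_trans (bl_ge y i) h1) h1
  rcases Nat.lt_or_ge (chk y z) i with h3 | h3
  · omega
  · rcases Nat.eq_or_lt_of_le h3 with h4 | h4
    · omega
    · exfalso
      have : bl y (i + 1) ≤ bl y (chk y z) := (bl_mono y) h4
      have := bl_chk_le y z
      omega

lemma chk_pos (z : ℕ) (hz : 1 ≤ z) : 1 ≤ chk y z :=
  Nat.le_findGreatest hz (by rw [bl_one]; exact hz)

lemma chk_lt (z m : ℕ) (h : z < bl y m) : chk y z < m := by
  by_contra h2
  push_neg at h2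
  have := (bl_mono y) h2
  have := bl_chk_le y z
  omega

lemma chk_ge (z i : ℕ) (h : bl y i ≤ z) : i ≤ chk y z :=
  Nat.le_findGreatest (le_trans (bl_ge y i) h) h

/-- the sequence: `1` at the start of each level, `0` elsewhere -/
def sig (p : ℕ) : ℕ := if slot y p = 0 then 1 else 0

lemma sig_zero_or_one (p : ℕ) : sig y p = 0 ∨ sig y p = 1 := by
  rw [sig]; split <;> simp

lemma sig_encode (m t : ℕ) (ht : t ≤ bl y m) :
    sig y (Ls y m + t) = if t = 0 then 1 else 0 := by
  rw [sig, slot_encode y m t ht]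

lemma sig_Ls (m : ℕ) : sig y (Ls y m) = 1 := by
  have := sig_encode y m 0 (Nat.zero_le _)
  simpa using this

lemma sig_zero_val : sig y 0 = 1 := by rw [sig, slot_zero]; simp

/-- the tree function (parent map) -/
def par (p : ℕ) : ℕ :=
  if p = 0 then 0
  else if slot y p ≤ 1 then Ls y (lev y p - 1)
  else Ls y (lev y p - 1) + 1 +
    min (slot y p - 1 - nn y (chk y (slot y p - 1) - 1)) (bl y (chk y (slot y p - 1)) - 1)

lemma par_zero : par y 0 = 0 := by rw [par]; simp

lemma par_spine (m : ℕ) : par y (Ls y (m + 1)) = Ls y m := by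
  have hp : Ls y (m + 1) ≠ 0 := by have := Ls_ge y (m + 1); omega
  have hlev : lev y (Ls y (m + 1)) = m + 1 := by
    have := lev_encode y (m + 1) 0 (Nat.zero_le _)
    simpa using this
  have hslot : slot y (Ls y (m + 1)) = 0 := by
    have := slot_encode y (m + 1) 0 (Nat.zero_le _)
    simpa using this
  rw [par, if_neg hp, hslot, hlev]
  simp

lemma par_one (m : ℕ) : par y (Ls y (m + 1) + 1) = Ls y m := by
  have hb : 1 ≤ bl y (m + 1) := bl_pos y (m + 1) (by omega)
  have hp : Ls y (m + 1) + 1 ≠ 0 := by omega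
  have hlev : lev y (Ls y (m + 1) + 1) = m + 1 := lev_encode y (m + 1) 1 hb
  have hslot : slot y (Ls y (m + 1) + 1) = 1 := slot_encode y (m + 1) 1 hb
  rw [par, if_neg hp, hslot, hlev]
  simp

lemma par_zero_formula (m z : ℕ) (hz : 1 ≤ z) (hzb : z < bl y (m + 1)) :
    par y (Ls y (m + 1) + 1 + z) =
      Ls y m + 1 + min (z - nn y (chk y z - 1)) (bl y (chk y z) - 1) := by
  have ht : 1 + z ≤ bl y (m + 1) := by omega
  have hp : Ls y (m + 1) + 1 + z ≠ 0 := by omega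
  have he : Ls y (m + 1) + 1 + z = Ls y (m + 1) + (1 + z) := by omega
  have hlev : lev y (Ls y (m + 1) + 1 + z) = m + 1 := by
    rw [he]; exact lev_encode y (m + 1) (1 + z) ht
  have hslot : slot y (Ls y (m + 1) + 1 + z) = 1 + z := by
    rw [he]; exact slot_encode y (m + 1) (1 + z) ht
  rw [par, if_neg hp, hslot, hlev]
  have h2 : ¬ (1 + z ≤ 1) := by omega
  rw [if_neg h2]
  have h3 : 1 + z - 1 = z := by omega
  rw [h3]
  simp

lemma gmin_le (m z : ℕ) (hz : 1 ≤ z) (hzb : z < bl y m) :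
    1 + min (z - nn y (chk y z - 1)) (bl y (chk y z) - 1) ≤ bl y (m - 1) := by
  have hi1 : 1 ≤ chk y z := chk_pos y z hz
  have hilt : chk y z < m := chk_lt y z m hzb
  have hm2 : 2 ≤ m := by
    by_contra h
    push_neg at h
    interval_cases m
    · rw [bl_zero] at hzb; omega
    · rw [bl_one] at hzb; omega
  have h1 : bl y (chk y z) ≤ bl y (m - 1) := (bl_mono y) (by omega)
  have h2 : 1 ≤ bl y (chk y z) := bl_pos y _ hi1
  omega

lemma par_child (m z : ℕ) (hz : z < bl y m) :
    par y (Ls y (m + 1) + 1 + (z + nn y (chk y z))) = Ls y m + 1 + z := by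
  have hipos : chk y z < m := chk_lt y z m hz
  have hni : 1 ≤ nn y (chk y z) := nn_pos y (chk y z)
  have hz' : 1 ≤ z + nn y (chk y z) := by omega
  have hble : bl y (chk y z + 1) = bl y (chk y z) + nn y (chk y z) := bl_succ y (chk y z)
  have hbcz : bl y (chk y z) ≤ z := bl_chk_le y z
  have hlt : z < bl y (chk y z + 1) := lt_bl_chk_succ y z
  have hchk' : chk y (z + nn y (chk y z)) = chk y z + 1 := by
    apply chk_eq_of
    · omega
    · have h2 : bl y (chk y z + 1 + 1) = bl y (chk y z + 1) + nn y (chk y z + 1) :=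
        bl_succ y (chk y z + 1)
      have h3 : nn y (chk y z) ≤ nn y (chk y z + 1) := (nn_mono y) (by omega)
      omega
  have hzb' : z + nn y (chk y z) < bl y (m + 1) := by
    have h1 : nn y (chk y z) ≤ nn y m := (nn_mono y) (by omega)
    have h2 : bl y (m + 1) = bl y m + nn y m := bl_succ y m
    omega
  rw [par_zero_formula y m (z + nn y (chk y z)) hz' hzb', hchk']
  have h4 : chk y z + 1 - 1 = chk y z := by omega
  rw [h4]
  have h5 : z + nn y (chk y z) - nn y (chk y z) = z := by omega
  rw [h5]
  have h6 : z ≤ bl y (chk y z + 1) - 1 := by omega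
  rw [min_eq_left h6]

lemma gmono (z : ℕ) (hz : 1 ≤ z) :
    min (z - nn y (chk y z - 1)) (bl y (chk y z) - 1) ≤
      min (z + 1 - nn y (chk y (z + 1) - 1)) (bl y (chk y (z + 1)) - 1) := by
  have h1 := lt_bl_chk_succ y z
  have hbcz : bl y (chk y z) ≤ z := bl_chk_le y z
  rcases Nat.lt_or_ge (z + 1) (bl y (chk y z + 1)) with h | h
  · have hc : chk y (z + 1) = chk y z := by
      apply chk_eq_of
      · omega
      · exact h
    rw [hc]
    omega
  · have he : z + 1 = bl y (chk y z + 1) := by omega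
    have hc : chk y (z + 1) = chk y z + 1 := by
      apply chk_eq_of
      · omega
      · have h2 : bl y (chk y z + 1 + 1) = bl y (chk y z + 1) + nn y (chk y z + 1) :=
          bl_succ y (chk y z + 1)
        have := nn_pos y (chk y z + 1)
        omega
    rw [hc]
    have h3 : bl y (chk y z + 1) = bl y (chk y z) + nn y (chk y z) := bl_succ y (chk y z)
    have h4 : bl y (chk y z + 1 + 1) = bl y (chk y z + 1) + nn y (chk y z + 1) :=
      bl_succ y (chk y z + 1)
    have h5 : chk y z + 1 - 1 = chk y z := by omega
    rw [h5]
    have := nn_pos y (chk y z)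
    have := nn_pos y (chk y z + 1)
    omega

lemma par_mono (p : ℕ) (hp : 1 ≤ p) : par y p ≤ par y (p + 1) := by
  have hm1 : 1 ≤ lev y p := lev_pos y p hp
  obtain ⟨m', hm'⟩ : ∃ m', lev y p = m' + 1 := ⟨lev y p - 1, by omega⟩
  have hdec := decomp y p
  have ht := slot_le y p
  rw [hm'] at hdec ht
  rcases Nat.lt_or_ge (slot y p) (bl y (m' + 1)) with hcase | hcase
  · -- p+1 stays in the same level
    rcases Nat.lt_or_ge (slot y p) 2 with ht2 | ht2
    · rcases Nat.lt_or_ge (slot y p) 1 with ht0 | ht1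
      · -- slot = 0 : p = Ls (m'+1)
        have hp1 : p = Ls y (m' + 1) := by omega
        rw [hp1, par_spine, par_one]
      · -- slot = 1
        have hp1 : p = Ls y (m' + 1) + 1 := by omega
        rw [hp1, par_one, par_zero_formula y m' 1 (le_refl 1) (by omega)]
        omega
    · -- slot ≥ 2
      obtain ⟨z, hzeq⟩ : ∃ z, z = slot y p - 1 := ⟨_, rfl⟩
      have hpz1 : p + 1 = Ls y (m' + 1) + 1 + (z + 1) := by omega
      have hpz : p = Ls y (m' + 1) + 1 + z := by omega
      rw [hpz1, hpz, par_zero_formula y m' z (by omega) (by omega),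
        par_zero_formula y m' (z + 1) (by omega) (by omega)]
      have := gmono y z (by omega)
      omega
  · -- slot = bl (m'+1) : p+1 starts the next level
    have hbp : 1 ≤ bl y (m' + 1) := bl_pos y _ (by omega)
    have hnext : p + 1 = Ls y (m' + 1 + 1) := by
      rw [Ls_succ]; omega
    rw [hnext, par_spine]
    rcases Nat.lt_or_ge (slot y p) 2 with ht2 | ht2
    · have hp1 : p = Ls y (m' + 1) + 1 := by omega
      rw [hp1, par_one]
      exact (Ls_strict y).monotone (by omega)
    · obtain ⟨z, hzeq⟩ : ∃ z, z = slot y p - 1 := ⟨_, rfl⟩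
      have hpz : p = Ls y (m' + 1) + 1 + z := by omega
      rw [hpz, par_zero_formula y m' z (by omega) (by omega)]
      have h5 := gmin_le y (m' + 1) z (by omega) (by omega)
      have h6 : m' + 1 - 1 = m' := by omega
      rw [h6] at h5
      have h7 : Ls y (m' + 1) = Ls y m' + 1 + bl y m' := Ls_succ y m'
      omega

lemma par_surj (q : ℕ) : ∃ p, 1 ≤ p ∧ par y p = q := by
  have hdec := decomp y q
  have ht := slot_le y q
  rcases Nat.eq_zero_or_pos (slot y q) with ht0 | ht1
  · refine ⟨Ls y (lev y q + 1), ?_, ?_⟩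
    · have := Ls_ge y (lev y q + 1); omega
    · rw [par_spine]; omega
  · have hzb : slot y q - 1 < bl y (lev y q) := by omega
    refine ⟨Ls y (lev y q + 1) + 1 + ((slot y q - 1) + nn y (chk y (slot y q - 1))), by omega, ?_⟩
    rw [par_child y (lev y q) (slot y q - 1) hzb]
    omega

/-- the set of descendants of the spine node `Ls j` -/
def Dset (j : ℕ) : Set ℕ := {p | ∃ m t, j ≤ m ∧ t ≤ bl y (m - j) ∧ p = Ls y m + t}

lemma iter_par_D (j : ℕ) : ∀ d t, t ≤ bl y d → (par y)^[d] (Ls y (j + d) + t) = Ls y j := by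
  intro d
  induction d with
  | zero =>
    intro t ht
    rw [bl_zero] at ht
    interval_cases t
    simp
  | succ d ih =>
    intro t ht
    rw [Function.iterate_succ_apply]
    rcases Nat.lt_or_ge t 2 with ht2 | ht2
    · rcases Nat.lt_or_ge t 1 with ht0 | ht1
      · have h0 : t = 0 := by omega
        subst h0
        have : j + (d + 1) = (j + d) + 1 := by omega
        rw [Nat.add_zero, this, par_spine]
        have := ih 0 (Nat.zero_le _)
        simpa using this
      · have h1 : t = 1 := by omega
        subst h1
        have : j + (d + 1) = (j + d) + 1 := by omega
        rw [this, par_one]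
        have := ih 0 (Nat.zero_le _)
        simpa using this
    · obtain ⟨z, hzeq⟩ : ∃ z, z = t - 1 := ⟨_, rfl⟩
      have hz1 : 1 ≤ z := by omega
      have hzb : z < bl y (d + 1) := by omega
      have he : Ls y (j + (d + 1)) + t = Ls y ((j + d) + 1) + 1 + z := by
        have : j + (d + 1) = (j + d) + 1 := by omega
        rw [this]; omega
      rw [he, par_zero_formula y (j + d) z hz1 (by
        have hb : bl y (d + 1) ≤ bl y (j + d + 1) := (bl_mono y) (by omega)
        omega)]
      have hle := gmin_le y (d + 1) z hz1 hzb
      have h6 : d + 1 - 1 = d := by omega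
      rw [h6] at hle
      have : Ls y (j + d) + 1 +
          min (z - nn y (chk y z - 1)) (bl y (chk y z) - 1) =
          Ls y (j + d) + (1 + min (z - nn y (chk y z - 1)) (bl y (chk y z) - 1)) := by omega
      rw [this]
      exact ih _ (by omega)

lemma D_sub_SP (j : ℕ) : Dset y j ⊆ SP (par y) (Ls y j) := by
  rintro p ⟨m, t, hjm, ht, rfl⟩
  refine ⟨m - j, ?_⟩
  have h := iter_par_D y j (m - j) t ht
  rwa [show j + (m - j) = m by omega] at h

lemma par_level (p : ℕ) (hp : 1 ≤ p) :
    par y p = Ls y (lev y p - 1) + slot y (par y p) ∧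
      slot y (par y p) ≤ bl y (lev y p - 1) := by
  have hm1 : 1 ≤ lev y p := lev_pos y p hp
  obtain ⟨m', hm'⟩ : ∃ m', lev y p = m' + 1 := ⟨lev y p - 1, by omega⟩
  have hdec := decomp y p
  have ht := slot_le y p
  rw [hm'] at hdec ht
  have key : ∃ t', t' ≤ bl y m' ∧ par y p = Ls y m' + t' := by
    rcases Nat.lt_or_ge (slot y p) 2 with ht2 | ht2
    · rcases Nat.lt_or_ge (slot y p) 1 with ht0 | ht1
      · have hp1 : p = Ls y (m' + 1) := by omega
        rw [hp1, par_spine]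
        exact ⟨0, Nat.zero_le _, by omega⟩
      · have hp1 : p = Ls y (m' + 1) + 1 := by omega
        rw [hp1, par_one]
        exact ⟨0, Nat.zero_le _, by omega⟩
    · obtain ⟨z, hzeq⟩ : ∃ z, z = slot y p - 1 := ⟨_, rfl⟩
      have hz1 : 1 ≤ z := by omega
      have hzb : z < bl y (m' + 1) := by omega
      have hpz : p = Ls y (m' + 1) + 1 + z := by omega
      rw [hpz, par_zero_formula y m' z hz1 hzb]
      have h5 := gmin_le y (m' + 1) z hz1 hzb
      have h6 : m' + 1 - 1 = m' := by omega
      rw [h6] at h5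
      exact ⟨1 + min (z - nn y (chk y z - 1)) (bl y (chk y z) - 1), by omega, by omega⟩
  obtain ⟨t', ht', heq⟩ := key
  have hlev : lev y (par y p) = m' := by rw [heq]; exact lev_encode y m' t' ht'
  have hslot : slot y (par y p) = t' := by rw [heq]; exact slot_encode y m' t' ht'
  rw [hm']
  constructor
  · rw [hslot]; simpa using heq
  · rw [hslot]; simpa using ht'

lemma par_mem_D (j : ℕ) (q : ℕ) (hq : par y q ∈ Dset y j) : q ∈ Dset y j := by
  rcases Nat.eq_zero_or_pos q with rfl | hq1
  · rw [par_zero] at hq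
    obtain ⟨m, t, hjm, ht, hmt⟩ := hq
    have h1 := Ls_ge y m
    have hm0 : m = 0 := by omega
    have hj0 : j = 0 := by omega
    subst hj0
    exact ⟨0, 0, le_refl 0, by rw [bl_zero], by rw [Ls_zero]⟩
  · have hm1 : 1 ≤ lev y q := lev_pos y q hq1
    obtain ⟨hpar, hps⟩ := par_level y q hq1
    obtain ⟨m, t, hjm, ht, hmt⟩ := hq
    -- decode uniqueness : m = lev y q - 1, t = slot y (par y q)
    have hlev1 : lev y (par y q) = lev y q - 1 := by
      rw [hpar]; exact lev_encode y _ _ hps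
    have hlev2 : lev y (par y q) = m := by
      rw [hmt]; exact lev_encode y m t (le_trans ht ((bl_mono y) (by omega)))
    have hslot1 : slot y (par y q) = t := by
      rw [hmt]; exact slot_encode y m t (le_trans ht ((bl_mono y) (by omega)))
    have hm : m = lev y q - 1 := by omega
    -- now show q ∈ Dset j
    have hdec := decomp y q
    have htq := slot_le y q
    refine ⟨lev y q, slot y q, by omega, ?_, hdec⟩
    rcases Nat.lt_or_ge (slot y q) 2 with ht2 | ht2
    · have hb1 : 1 ≤ bl y (lev y q - j) := bl_pos y _ (by omega)
      omega
    · -- slot ≥ 2 : use the formula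
      obtain ⟨z, hzeq⟩ : ∃ z, z = slot y q - 1 := ⟨_, rfl⟩
      obtain ⟨m', hm'⟩ : ∃ m', lev y q = m' + 1 := ⟨lev y q - 1, by omega⟩
      have hz1 : 1 ≤ z := by omega
      have hzb : z < bl y (m' + 1) := by
        have := slot_le y q; rw [hm'] at this; omega
      have hqz : q = Ls y (m' + 1) + 1 + z := by
        rw [hm'] at hdec; omega
      have hform : par y q = Ls y m' + 1 +
          min (z - nn y (chk y z - 1)) (bl y (chk y z) - 1) := by
        rw [hqz, par_zero_formula y m' z hz1 hzb]
      -- t = slot (par q) = 1 + min ...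
      have htval : t = 1 + min (z - nn y (chk y z - 1)) (bl y (chk y z) - 1) := by
        have h5 := gmin_le y (m' + 1) z hz1 hzb
        have h6 : m' + 1 - 1 = m' := by omega
        rw [h6] at h5
        have : slot y (par y q) = 1 + min (z - nn y (chk y z - 1)) (bl y (chk y z) - 1) := by
          rw [hform]
          have he : Ls y m' + 1 + min (z - nn y (chk y z - 1)) (bl y (chk y z) - 1)
              = Ls y m' + (1 + min (z - nn y (chk y z - 1)) (bl y (chk y z) - 1)) := by omega
          rw [he]
          exact slot_encode y m' _ (by omega)
        omega
      -- suppose z ≥ bl (lev q - j) and derive a contradiction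
      by_contra hcon
      push_neg at hcon
      have hzge : bl y (m' + 1 - j) ≤ z := by
        rw [← hm']; omega
      have hij : m' + 1 - j ≤ chk y z := chk_ge y z _ hzge
      have hjm1 : 1 ≤ m' + 1 - j := by omega
      have hcz : 1 ≤ chk y z := by omega
      obtain ⟨i', hi'⟩ : ∃ i', chk y z = i' + 1 := ⟨chk y z - 1, by omega⟩
      have hble : bl y (i' + 1) = bl y i' + nn y i' := bl_succ y i'
      have hbcz : bl y (chk y z) ≤ z := bl_chk_le y z
      -- lower bounds for both arguments of the min
      have harg1 : bl y (m' + 1 - j - 1) ≤ z - nn y (chk y z - 1) := by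
        have h8 : m' + 1 - j - 1 ≤ i' := by omega
        have h9 : bl y (m' + 1 - j - 1) ≤ bl y i' := (bl_mono y) h8
        rw [hi']
        have h10 : i' + 1 - 1 = i' := by omega
        rw [h10]
        rw [hi'] at hbcz
        omega
      have harg2 : bl y (m' + 1 - j - 1) ≤ bl y (chk y z) - 1 := by
        have h8 : bl y (m' + 1 - j - 1) < bl y (m' + 1 - j) := bl_strict y (by omega)
        have h9 : bl y (m' + 1 - j) ≤ bl y (chk y z) := (bl_mono y) hij
        omega
      -- but t ≤ bl (m - j) = bl (lev q - 1 - j)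
      have hup : t ≤ bl y (m' + 1 - j - 1) := by
        have : m - j = m' + 1 - j - 1 := by
          rw [hm, hm']; omega
        rw [← this]; exact ht
      omega

lemma SP_spine (j : ℕ) : SP (par y) (Ls y j) = Dset y j := by
  apply Set.Subset.antisymm
  · rintro q ⟨k, hk⟩
    induction k generalizing q with
    | zero =>
      simp only [Function.iterate_zero, id_eq] at hk
      exact hk ▸ ⟨j, 0, le_refl j, by rw [Nat.sub_self, bl_zero], by omega⟩
    | succ k ih =>
      rw [Function.iterate_succ_apply] at hk
      exact par_mem_D y j q (ih hk)
  · exact D_sub_SP y j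

/-- the increasing enumeration of `Dset j` -/
def enum (j i : ℕ) : ℕ := Ls y (j + lev y i) + slot y i

lemma enum_strict (j : ℕ) : StrictMono (enum y j) := by
  apply strictMono_nat_of_lt_succ
  intro i
  have hdec := decomp y i
  have hts := slot_le y i
  rcases Nat.lt_or_ge (slot y i) (bl y (lev y i)) with h | h
  · have henc : i + 1 = Ls y (lev y i) + (slot y i + 1) := by omega
    have hlev : lev y (i + 1) = lev y i := by
      rw [henc]; exact lev_encode y (lev y i) (slot y i + 1) (by omega)
    have hslot : slot y (i + 1) = slot y i + 1 := by
      rw [henc]; exact slot_encode y (lev y i) (slot y i + 1) (by omega)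
    rw [enum, enum, hlev, hslot]
    omega
  · have hip : i + 1 = Ls y (lev y i + 1) := by
      rw [Ls_succ]; omega
    have hlev : lev y (i + 1) = lev y i + 1 := by
      rw [hip]
      have := lev_encode y (lev y i + 1) 0 (Nat.zero_le _)
      simpa using this
    have hslot : slot y (i + 1) = 0 := by
      rw [hip]
      have := slot_encode y (lev y i + 1) 0 (Nat.zero_le _)
      simpa using this
    rw [enum, enum, hlev, hslot]
    have h1 : j + (lev y i + 1) = (j + lev y i) + 1 := by omega
    rw [h1, Ls_succ]
    have h2 : bl y (lev y i) ≤ bl y (j + lev y i) := (bl_mono y) (by omega)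
    omega

lemma enum_range (j : ℕ) : Set.range (enum y j) = Dset y j := by
  apply Set.Subset.antisymm
  · rintro p ⟨i, rfl⟩
    refine ⟨j + lev y i, slot y i, by omega, ?_, rfl⟩
    have h1 : j + lev y i - j = lev y i := by omega
    rw [h1]
    exact slot_le y i
  · rintro p ⟨m, t, hjm, ht, rfl⟩
    refine ⟨Ls y (m - j) + t, ?_⟩
    rw [enum, lev_encode y (m - j) t ht, slot_encode y (m - j) t ht,
      show j + (m - j) = m by omega]

lemma Dset_infinite (j : ℕ) : (Dset y j).Infinite := by
  rw [← enum_range y j]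
  exact Set.infinite_range_of_injective (enum_strict y j).injective

lemma nth_Dset (j : ℕ) : Nat.nth (· ∈ Dset y j) = enum y j := by
  have hinf : (setOf (· ∈ Dset y j)).Infinite := Dset_infinite y j
  rw [← StrictMono.range_inj (Nat.nth_strictMono hinf) (enum_strict y j)]
  rw [Nat.range_nth_of_infinite hinf]
  exact (enum_range y j).symm

lemma subseq_spine (j : ℕ) : subseq (sig y) (SP (par y) (Ls y j)) = sig y := by
  funext i
  rw [subseq, SP_spine, nth_Dset]
  have hts := slot_le y i
  have h1 : slot y i ≤ bl y (j + lev y i) := le_trans hts ((bl_mono y) (by omega))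
  rw [enum, sig, slot_encode y _ _ h1, sig]

lemma spine_child_mem (j : ℕ) : ∀ k, (par y)^[k]
    (Ls y (j + k)) = Ls y j := by
  intro k
  have h := iter_par_D y j k 0 (Nat.zero_le _)
  simpa using h

lemma sig_par (q : ℕ) (h : sig y q = 1) : sig y (par y q) = 1 := by
  rcases Nat.eq_zero_or_pos q with rfl | hq
  · rwa [par_zero]
  · rw [sig] at h
    have hs : slot y q = 0 := by by_contra hc; rw [if_neg hc] at h; omega
    have hm1 : 1 ≤ lev y q := lev_pos y q hq
    have hdec := decomp y q
    have hq1 : q = Ls y ((lev y q - 1) + 1) := by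
      rw [show lev y q - 1 + 1 = lev y q by omega]; omega
    rw [hq1, par_spine, sig_Ls]

lemma SP_zero_sig (p : ℕ) (hp : slot y p ≠ 0) :
    ∀ q ∈ SP (par y) p, sig y q = 0 := by
  rintro q ⟨k, hk⟩
  induction k generalizing q with
  | zero =>
    simp only [Function.iterate_zero, id_eq] at hk
    subst hk
    rw [sig, if_neg hp]
  | succ k ih =>
    rw [Function.iterate_succ_apply] at hk
    have h2 := ih _ hk
    rcases sig_zero_or_one y q with h | h
    · exact h
    · exact absurd (sig_par y q h) (by omega)

/-- the step from a `0`-node to one of its children, on (level, 0-index) pairs -/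
def stepz (s : ℕ × ℕ) : ℕ × ℕ := (s.1 + 1, s.2 + nn y (chk y s.2))

def encz (s : ℕ × ℕ) : ℕ := Ls y s.1 + 1 + s.2

lemma stepz_inv (s : ℕ × ℕ) (h : s.2 < bl y s.1) :
    (stepz y s).2 < bl y (stepz y s).1 := by
  have h1 : chk y s.2 < s.1 := chk_lt y s.2 s.1 h
  have h2 : nn y (chk y s.2) ≤ nn y s.1 := (nn_mono y) (by omega)
  have h3 : bl y (s.1 + 1) = bl y s.1 + nn y s.1 := bl_succ y s.1
  simp only [stepz]
  omega

lemma stepz_par (s : ℕ × ℕ) (h : s.2 < bl y s.1) :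
    par y (encz y (stepz y s)) = encz y s := by
  simp only [stepz, encz]
  exact par_child y s.1 s.2 h

lemma SP_zero_infinite (p : ℕ) (hp : slot y p ≠ 0) :
    (SP (par y) p).Infinite := by
  have hq1 : 1 ≤ p := by
    rcases Nat.eq_zero_or_pos p with rfl | h
    · exact absurd (slot_zero y) hp
    · exact h
  set s0 : ℕ × ℕ := (lev y p, slot y p - 1) with hs0
  have hdec := decomp y p
  have hts := slot_le y p
  have hinv0 : s0.2 < bl y s0.1 := by
    simp only [hs0]
    omega
  have hinv : ∀ k, ((stepz y)^[k] s0).2 < bl y ((stepz y)^[k] s0).1 := by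
    intro k
    induction k with
    | zero => simpa using hinv0
    | succ k ih =>
      rw [Function.iterate_succ_apply']
      exact stepz_inv y _ ih
  have hp0 : encz y s0 = p := by
    simp only [encz, hs0]
    omega
  have hmem : ∀ k, (par y)^[k] (encz y ((stepz y)^[k] s0)) = p := by
    intro k
    induction k with
    | zero => simpa using hp0
    | succ k ih =>
      rw [Function.iterate_succ_apply, Function.iterate_succ_apply',
        stepz_par y _ (hinv k)]
      exact ih
  have hstrict : StrictMono (fun k => encz y ((stepz y)^[k] s0)) := by
    apply strictMono_nat_of_lt_succ
    intro k
    rw [Function.iterate_succ_apply']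
    have hk := hinv k
    set s := (stepz y)^[k] s0
    show encz y s < encz y (stepz y s)
    simp only [encz, stepz]
    have : Ls y (s.1 + 1) = Ls y s.1 + 1 + bl y s.1 := Ls_succ y s.1
    omega
  exact Set.infinite_of_injective_forall_mem hstrict.injective (fun k => ⟨k, hmem k⟩)

lemma subseq_zero (p : ℕ) (hp : slot y p ≠ 0) :
    subseq (sig y) (SP (par y) p) = fun _ => 0 := by
  funext i
  rw [subseq]
  exact SP_zero_sig y p hp _ (Nat.nth_mem_of_infinite (SP_zero_infinite y p hp) i)

lemma sig_ne_zero : sig y ≠ fun _ => 0 := by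
  intro h
  have := congrFun h 0
  rw [sig_zero_val] at this
  exact one_ne_zero this

lemma range_subseq :
    (Set.range fun q => subseq (sig y) (SP (par y) q)) = {sig y, fun _ => 0} := by
  ext x
  simp only [Set.mem_range, Set.mem_insert_iff, Set.mem_singleton_iff]
  constructor
  · rintro ⟨q, rfl⟩
    rcases eq_or_ne (slot y q) 0 with h | h
    · left
      have hq : q = Ls y (lev y q) := by
        have := decomp y q; omega
      rw [hq, subseq_spine]
    · right
      exact subseq_zero y q h
  · rintro (rfl | rfl)
    · refine ⟨0, ?_⟩
      rw [show (0:ℕ) = Ls y 0 from (Ls_zero y).symm, subseq_spine]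
    · refine ⟨2, ?_⟩
      have h2 : slot y 2 ≠ 0 := by
        have hb : (1:ℕ) ≤ bl y 1 := by rw [bl_one]
        have := slot_encode y 1 1 hb
        rw [Ls_one] at this
        norm_num at this
        omega
      exact subseq_zero y 2 h2

lemma sig_eq_one_iff (p : ℕ) : sig y p = 1 ↔ ∃ m, p = Ls y m := by
  constructor
  · intro h
    rw [sig] at h
    have hs : slot y p = 0 := by
      by_contra hc; rw [if_neg hc] at h; omega
    have := decomp y p
    exact ⟨lev y p, by omega⟩
  · rintro ⟨m, rfl⟩
    exact sig_Ls y m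

lemma sig_inj : Function.Injective (fun y : ℕ → Bool => sig y) := by
  intro y y' h
  simp only at h
  have hL : Ls y = Ls y' := by
    rw [← StrictMono.range_inj (Ls_strict y) (Ls_strict y')]
    have h1 : Set.range (Ls y) = {p | sig y p = 1} := by
      ext p
      simp only [Set.mem_range, Set.mem_setOf_eq]
      rw [sig_eq_one_iff]
      exact ⟨fun ⟨m, hm⟩ => ⟨m, hm.symm⟩, fun ⟨m, hm⟩ => ⟨m, hm.symm⟩⟩
    have h2 : Set.range (Ls y') = {p | sig y' p = 1} := by
      ext p
      simp only [Set.mem_range, Set.mem_setOf_eq]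
      rw [sig_eq_one_iff]
      exact ⟨fun ⟨m, hm⟩ => ⟨m, hm.symm⟩, fun ⟨m, hm⟩ => ⟨m, hm.symm⟩⟩
    rw [h1, h2, h]
  have hbl : ∀ m, bl y m = bl y' m := by
    intro m
    have e1 : Ls y (m + 1) = Ls y m + 1 + bl y m := Ls_succ y m
    have e2 : Ls y' (m + 1) = Ls y' m + 1 + bl y' m := Ls_succ y' m
    have c1 := congrFun hL (m + 1)
    have c2 := congrFun hL m
    omega
  have hnn : ∀ m, nn y m = nn y' m := by
    intro m
    have e1 : bl y (m + 1) = bl y m + nn y m := bl_succ y m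
    have e2 : bl y' (m + 1) = bl y' m + nn y' m := bl_succ y' m
    have c1 := hbl (m + 1)
    have c2 := hbl m
    omega
  funext m
  have e1 : nn y (m + 1) = nn y m + 2 + cond (y m) 1 0 := nn_succ y m
  have e2 : nn y' (m + 1) = nn y' m + 2 + cond (y' m) 1 0 := nn_succ y' m
  have c1 := hnn (m + 1)
  have c2 := hnn m
  have hcond : (cond (y m) 1 0 : ℕ) = cond (y' m) 1 0 := by omega
  cases hym : y m <;> cases hym' : y' m <;> rw [hym, hym'] at hcond <;> simp_all

end NM

/-- There is a sequence `σ` over `{0,1}` and a (not rational) tree function `P` with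
`{ σ^{S_P(n)} | n ∈ ℕ }` finite — in fact of exactly two elements — while `σ` is not
morphic. Hence rationality cannot be dropped in the subsequence characterization. -/
theorem not_morphic_with_two_subsequences :
    ∃ (σ : ℕ → ℕ) (P : ℕ → ℕ),
      (∀ n, σ n = 0 ∨ σ n = 1) ∧
      P 0 = 0 ∧
      (∀ n, 1 ≤ n → P n ≤ P (n + 1)) ∧
      (∀ m : ℕ, ∃ n, 1 ≤ n ∧ P n = m) ∧
      (Set.range fun n : ℕ => subseq σ (SP P n)).Finite ∧
      (Set.range fun n : ℕ => subseq σ (SP P n)).ncard = 2 ∧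
      ∀ (Γ : Type) (_ : Fintype Γ) (f : Γ → List Γ) (τ : Γ → ℕ) (a : Γ)
        (u : List Γ) (σΓ : ℕ → Γ),
        (∀ b : Γ, f b ≠ []) → f a = a :: u → u ≠ [] →
        σΓ 0 = a → seqFlat f σΓ = σΓ →
        σ ≠ fun n => τ (σΓ n) := by
  classical
  have hex : ∃ y : ℕ → Bool, NM.sig y ∉ NM.MorphicSet := by
    by_contra hcon
    push_neg at hcon
    have hsub : Set.range (fun y : ℕ → Bool => NM.sig y) ⊆ NM.MorphicSet := by
      rintro x ⟨y, rfl⟩; exact hcon y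
    have hc : (Set.range (fun y : ℕ → Bool => NM.sig y)).Countable :=
      NM.morphicSet_countable.mono hsub
    have hcount : Countable (ℕ → Bool) := by
      have := hc.to_subtype
      exact Countable.of_equiv _ (Equiv.ofInjective _ NM.sig_inj).symm
    obtain ⟨f, hf⟩ := exists_surjective_nat (ℕ → Bool)
    obtain ⟨k, hk⟩ := hf (fun n => !(f n n))
    have hkk := congrFun hk k
    cases hb : f k k <;> rw [hb] at hkk <;> simp_all
  obtain ⟨y, hy⟩ := hex
  refine ⟨NM.sig y, NM.par y, NM.sig_zero_or_one y, NM.par_zero y, NM.par_mono y,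
    NM.par_surj y, ?_, ?_, ?_⟩
  · rw [NM.range_subseq y]
    exact (Set.finite_singleton _).insert _
  · rw [NM.range_subseq y]
    exact Set.ncard_pair (NM.sig_ne_zero y)
  · intro Γ inst f τ a u σΓ hne hfa hu h0 hfix heq
    exact hy ⟨Γ, inst, f, τ, a, u, σΓ, hne, hfa, hu, h0, hfix, heq⟩
end

section
/- Let σ = τ(f^∞(a)) be a morphic sequence over Σ, with f : Γ → Γ⁺, f(a) = a·u, u ∈ Γ⁺, τ : Γ → Σ. Consider the term rewriting system R_σ over the signature Σ ∪ Γ ∪ Γ̄ ∪ {S, E} (Γ̄ a disjoint copy of Γ; E a constant, all other symbols unary) with rules: S(b(x)) → τ(b)(S(b̄(x))) for all b ∈ Γ; b̄(c(x)) → c(b̄(x)) for all b,c ∈ Γ; b̄(E) → f(b)(E) for all b ∈ Γ. Then for every n > 0 there is a finite R_σ-reduction τ(a)(S(u(E))) →⁺ τ(fⁿ(a))(S(fⁿ(u)(E))), where for a word w of unary symbols, w(t) abbreviates the nested application w₀(w₁(⋯(w_{k-1}(t))⋯)). -/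
/-- Applying a morphism `f : Γ → Γ⁺` (extended to words by concatenation) `n` times. -/
def wordIter {Γ : Type*} (f : Γ → List Γ) (n : ℕ) (w : List Γ) : List Γ :=
  (fun v => v.flatMap f)^[n] w

/-- The signature `Σ ∪ Γ ∪ Γ̄ ∪ {S}` of unary symbols (plus the constant `E`,
represented by the end of the list). A term `w₀(w₁(⋯(E)⋯))` is the list `[w₀, w₁, …]`. -/
inductive MSym (A Γ : Type) where
  | out : A → MSym A Γ
  | lett : Γ → MSym A Γ
  | bar : Γ → MSym A Γ
  | S : MSym A Γ

/-- One rewrite step of the system `R_σ`: rules `S(b(x)) → τ(b)(S(b̄(x)))`,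
`b̄(c(x)) → c(b̄(x))`, `b̄(E) → f(b)(E)`, applied at any position. -/
def MStep {A Γ : Type} (f : Γ → List Γ) (τ : Γ → A)
    (t t' : List (MSym A Γ)) : Prop :=
  (∃ (c x : List (MSym A Γ)) (b : Γ),
      t = c ++ [MSym.S, MSym.lett b] ++ x ∧
      t' = c ++ [MSym.out (τ b), MSym.S, MSym.bar b] ++ x) ∨
  (∃ (c x : List (MSym A Γ)) (b d : Γ),
      t = c ++ [MSym.bar b, MSym.lett d] ++ x ∧
      t' = c ++ [MSym.lett d, MSym.bar b] ++ x) ∨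
  (∃ (c : List (MSym A Γ)) (b : Γ),
      t = c ++ [MSym.bar b] ∧
      t' = c ++ (f b).map MSym.lett)

namespace MAux

lemma RT.cast {α} {r : α → α → Prop} {a b a' b' : α}
    (h : Relation.ReflTransGen r a b) (ha : a = a') (hb : b = b') :
    Relation.ReflTransGen r a' b' := ha ▸ hb ▸ h

lemma TG.cast {α} {r : α → α → Prop} {a b a' b' : α}
    (h : Relation.TransGen r a b) (ha : a = a') (hb : b = b') :
    Relation.TransGen r a' b' := ha ▸ hb ▸ h

variable {A Γ : Type} (f : Γ → List Γ) (τ : Γ → A)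

lemma bar_comm (b : Γ) (v : List Γ) :
    ∀ p : List (MSym A Γ),
      Relation.ReflTransGen (MStep f τ)
        (p ++ [MSym.bar b] ++ v.map MSym.lett)
        (p ++ v.map MSym.lett ++ [MSym.bar b]) := by
  induction v with
  | nil => intro p; simp only [List.map_nil, List.append_nil]; exact Relation.ReflTransGen.refl
  | cons d v' ih =>
    intro p
    refine Relation.ReflTransGen.head
      (b := (p ++ [MSym.lett d]) ++ [MSym.bar b] ++ v'.map MSym.lett) ?_ ?_
    · exact Or.inr (Or.inl ⟨p, v'.map MSym.lett, b, d, by simp, by simp⟩)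
    · exact RT.cast (ih (p ++ [MSym.lett d])) rfl (by simp)

lemma sweep (w : List Γ) :
    ∀ (acc : List Γ) (p : List (MSym A Γ)),
      Relation.ReflTransGen (MStep f τ)
        (p ++ [MSym.S] ++ w.map MSym.lett ++ acc.map MSym.lett)
        (p ++ w.map (fun c => MSym.out (τ c)) ++ [MSym.S] ++
          (acc ++ w.flatMap f).map MSym.lett) := by
  induction w with
  | nil => intro acc p; simp only [List.map_nil, List.append_nil, List.nil_append, List.flatMap_nil]; exact Relation.ReflTransGen.refl
  | cons b w' ih =>
    intro acc p
    -- step 1 : S(b x) → τ(b) S b̄ x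
    have s1 : MStep f τ (p ++ [MSym.S] ++ (b :: w').map MSym.lett ++ acc.map MSym.lett)
        ((p ++ [MSym.out (τ b), MSym.S]) ++ [MSym.bar b] ++ (w' ++ acc).map MSym.lett) :=
      Or.inl ⟨p, (w' ++ acc).map MSym.lett, b, by simp, by simp⟩
    -- b̄ moves to the end
    have s2 := bar_comm f τ b (w' ++ acc) (p ++ [MSym.out (τ b), MSym.S])
    -- b̄(E) → f(b)(E)
    have s3 : MStep f τ
        ((p ++ [MSym.out (τ b), MSym.S]) ++ (w' ++ acc).map MSym.lett ++ [MSym.bar b])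
        ((p ++ [MSym.out (τ b), MSym.S]) ++ (w' ++ acc).map MSym.lett ++ (f b).map MSym.lett) :=
      Or.inr (Or.inr ⟨(p ++ [MSym.out (τ b), MSym.S]) ++ (w' ++ acc).map MSym.lett, b,
        by simp, by simp⟩)
    have h := ih (acc ++ f b) (p ++ [MSym.out (τ b)])
    refine Relation.ReflTransGen.head s1 (((s2.tail s3).trans (RT.cast h (by simp) rfl)).trans ?_)
    exact RT.cast Relation.ReflTransGen.refl rfl (by simp)

lemma sweep_cons (b : Γ) (w' acc : List Γ) (p : List (MSym A Γ)) :
    Relation.TransGen (MStep f τ)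
      (p ++ [MSym.S] ++ (b :: w').map MSym.lett ++ acc.map MSym.lett)
      (p ++ (b :: w').map (fun c => MSym.out (τ c)) ++ [MSym.S] ++
        (acc ++ (b :: w').flatMap f).map MSym.lett) := by
  have s1 : MStep f τ (p ++ [MSym.S] ++ (b :: w').map MSym.lett ++ acc.map MSym.lett)
      ((p ++ [MSym.out (τ b), MSym.S]) ++ [MSym.bar b] ++ (w' ++ acc).map MSym.lett) :=
    Or.inl ⟨p, (w' ++ acc).map MSym.lett, b, by simp, by simp⟩
  have s2 := bar_comm f τ b (w' ++ acc) (p ++ [MSym.out (τ b), MSym.S])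
  have s3 : MStep f τ
      ((p ++ [MSym.out (τ b), MSym.S]) ++ (w' ++ acc).map MSym.lett ++ [MSym.bar b])
      ((p ++ [MSym.out (τ b), MSym.S]) ++ (w' ++ acc).map MSym.lett ++ (f b).map MSym.lett) :=
    Or.inr (Or.inr ⟨(p ++ [MSym.out (τ b), MSym.S]) ++ (w' ++ acc).map MSym.lett, b,
      by simp, by simp⟩)
  have h := sweep f τ w' (acc ++ f b) (p ++ [MSym.out (τ b)])
  refine Relation.TransGen.head' s1 (((s2.tail s3).trans (RT.cast h (by simp) rfl)).trans ?_)
  exact RT.cast Relation.ReflTransGen.refl rfl (by simp)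

lemma wordIter_succ {Γ : Type*} (f : Γ → List Γ) (n : ℕ) (w : List Γ) :
    wordIter f (n + 1) w = (wordIter f n w).flatMap f :=
  Function.iterate_succ_apply' _ n w

lemma wordIter_append {Γ : Type*} (f : Γ → List Γ) (n : ℕ) (x y : List Γ) :
    wordIter f n (x ++ y) = wordIter f n x ++ wordIter f n y := by
  induction n generalizing x y with
  | zero => rfl
  | succ n ih =>
    simp only [wordIter_succ, ih, List.flatMap_append]

lemma wordIter_ne_nil {Γ : Type*} (f : Γ → List Γ) (hne : ∀ b : Γ, f b ≠ [])
    (n : ℕ) (w : List Γ) (hw : w ≠ []) : wordIter f n w ≠ [] := by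
  induction n generalizing w with
  | zero => exact hw
  | succ n ih =>
    rw [wordIter_succ]
    have h := ih w hw
    cases hcase : wordIter f n w with
    | nil => exact absurd hcase h
    | cons b v =>
      simp only [hcase, List.flatMap_cons]
      intro hcontra
      exact hne b (List.append_eq_nil_iff.mp hcontra).1

end MAux

open MAux in
/-- For every `n > 0` there is a finite `R_σ`-reduction
`τ(a)(S(u(E))) →⁺ τ(fⁿ(a))(S(fⁿ(u)(E)))`. -/
theorem rewrite_to_level_n {A Γ : Type} [Fintype A] [Fintype Γ]
    (f : Γ → List Γ) (τ : Γ → A) (a : Γ) (u : List Γ)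
    (hne : ∀ b : Γ, f b ≠ []) (hu : u ≠ []) (hfa : f a = a :: u) :
    ∀ n, 0 < n →
      Relation.TransGen (MStep f τ)
        ([MSym.out (τ a), MSym.S] ++ u.map MSym.lett)
        ((wordIter f n [a]).map (fun c => MSym.out (τ c)) ++ [MSym.S] ++
          (wordIter f n u).map MSym.lett) := by
  set st : ℕ → List (MSym A Γ) := fun n =>
    (wordIter f n [a]).map (fun c => MSym.out (τ c)) ++ [MSym.S] ++
      (wordIter f n u).map MSym.lett with hst
  have key : ∀ n, Relation.TransGen (MStep f τ) (st n) (st (n + 1)) := by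
    intro n
    obtain ⟨b, w', hw⟩ := List.exists_cons_of_ne_nil (wordIter_ne_nil f hne n u hu)
    have h := sweep_cons f τ b w' [] ((wordIter f n [a]).map (fun c => MSym.out (τ c)))
    refine TG.cast h ?_ ?_
    · simp [hst, hw]
    · have e1 : wordIter f (n + 1) [a] = wordIter f n [a] ++ wordIter f n u := by
        have : wordIter f (n + 1) [a] = wordIter f n ([a].flatMap f) := by
          simp [wordIter, Function.iterate_succ_apply]
        rw [this]
        simp only [List.flatMap_cons, List.flatMap_nil, List.append_nil, hfa]
        rw [show (a :: u : List Γ) = [a] ++ u from rfl, wordIter_append]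
      have e2 : wordIter f (n + 1) u = (b :: w').flatMap f := by
        rw [wordIter_succ, hw]
      simp [hst, e1, e2, hw]
  have aux : ∀ m, Relation.TransGen (MStep f τ) (st 0) (st (m + 1)) := by
    intro m
    induction m with
    | zero => exact key 0
    | succ m ih => exact ih.trans (key (m + 1))
  intro n hn
  obtain ⟨m, rfl⟩ := Nat.exists_eq_add_of_lt hn
  have h := aux m
  refine TG.cast h ?_ (by simp [hst])
  simp [hst, wordIter]
end

section
/- Let fib = f^∞(0) for f(0) = 01, f(1) = 0, and let g, ρ be defined by g(0) = 2, g(1) = g(2) = 10, ρ(0) = ρ(2) = 0, ρ(1) = 1 on alphabet {0,1,2}. Then ρ(g^∞(1)) = tail(fib), i.e. ρ applied letterwise to the fixed point of g starting at 1 equals the Fibonacci sequence with its first letter removed. -/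
/-- The morphism `g 0 = 2`, `g 1 = g 2 = 10` on `{0,1,2}`. -/
def gMor : ℕ → List ℕ := fun n => if n = 0 then [2] else [1, 0]

/-- The coding `ρ 0 = ρ 2 = 0`, `ρ 1 = 1`. -/
def ρCode : ℕ → ℕ := fun n => if n = 1 then 1 else 0

/-! ### Auxiliary machinery -/

/-- Iterating a morphism on a word. -/
def itMor (f : ℕ → List ℕ) : ℕ → List ℕ → List ℕ
  | 0, l => l
  | n + 1, l => (itMor f n l).flatMap f

lemma itMor_append (f : ℕ → List ℕ) (n : ℕ) (l₁ l₂ : List ℕ) :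
    itMor f n (l₁ ++ l₂) = itMor f n l₁ ++ itMor f n l₂ := by
  induction n with
  | zero => rfl
  | succ n ih => simp [itMor, ih]

lemma itMor_succ' (f : ℕ → List ℕ) (n : ℕ) (l : List ℕ) :
    itMor f (n + 1) l = itMor f n (l.flatMap f) := by
  induction n with
  | zero => rfl
  | succ n ih =>
      show (itMor f (n + 1) l).flatMap f = (itMor f n (l.flatMap f)).flatMap f
      rw [ih]

/-- Finite prefixes appearing in `seqFlat`. -/
def pref (f : ℕ → List ℕ) (σ : ℕ → ℕ) (n : ℕ) : List ℕ :=
  (List.range n).flatMap fun i => f (σ i)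

lemma pref_len (f : ℕ → List ℕ) (σ : ℕ → ℕ) (hne : ∀ c, 1 ≤ (f c).length) (n : ℕ) :
    n ≤ (pref f σ n).length := by
  induction n with
  | zero => simp [pref]
  | succ n ih =>
      have : pref f σ (n + 1) = pref f σ n ++ f (σ n) := by
        simp [pref, List.range_succ]
      rw [this, List.length_append]
      have := hne (σ n)
      omega

lemma pref_prefix (f : ℕ → List ℕ) (σ : ℕ → ℕ) {a b : ℕ} (h : a ≤ b) :
    pref f σ a <+: pref f σ b := by
  obtain ⟨k, rfl⟩ := Nat.exists_eq_add_of_le h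
  simp only [pref, List.range_add, List.flatMap_append]
  exact ⟨_, rfl⟩

lemma pref_getD (f : ℕ → List ℕ) (σ : ℕ → ℕ) (hne : ∀ c, 1 ≤ (f c).length)
    (hfix : seqFlat f σ = σ) (n k : ℕ) (d : ℕ) (hk : k < (pref f σ n).length) :
    (pref f σ n).getD k d = σ k := by
  have hσ : σ k = (pref f σ (k + 1)).getD k (σ 0) := by
    conv_lhs => rw [← hfix]
    rfl
  have hk1 : k < (pref f σ (k + 1)).length :=
    lt_of_lt_of_le (Nat.lt_succ_self k) (pref_len f σ hne (k + 1))
  rw [List.getD_eq_getElem _ _ hk]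
  rw [hσ, List.getD_eq_getElem _ _ hk1]
  rcases le_total n (k + 1) with h | h
  · exact (pref_prefix f σ h).getElem hk
  · exact ((pref_prefix f σ h).getElem hk1).symm

/-- The iterated word `fⁿ(σ 0)` is a prefix of a fixed point `σ`. -/
lemma itMor_getD (f : ℕ → List ℕ) (σ : ℕ → ℕ) (hne : ∀ c, 1 ≤ (f c).length)
    (hfix : seqFlat f σ = σ) (n : ℕ) :
    ∀ k d, k < (itMor f n [σ 0]).length → (itMor f n [σ 0]).getD k d = σ k := by
  induction n with
  | zero =>
      intro k d hk
      simp [itMor] at hk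
      subst hk
      rfl
  | succ n ih =>
      intro k d hk
      set m := (itMor f n [σ 0]).length with hm
      have heq : itMor f n [σ 0] = (List.range m).map σ := by
        apply List.ext_getElem
        · simp [hm]
        · intro i h1 h2
          have := ih i d h1
          rw [List.getD_eq_getElem _ _ h1] at this
          simp [this]
      have hbind : itMor f (n + 1) [σ 0] = pref f σ m := by
        show (itMor f n [σ 0]).flatMap f = pref f σ m
        rw [heq, pref]
        simp [List.flatMap_map, Function.comp]
      rw [hbind] at hk ⊢
      exact pref_getD f σ hne hfix m k d hk

/-! ### The combinatorial heart -/

def Fw (n : ℕ) : List ℕ := itMor fibMor n [0]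
def Fw1 (n : ℕ) : List ℕ := itMor fibMor n [1]
def Gw (n : ℕ) : List ℕ := itMor gMor n [1]
def Gw0 (n : ℕ) : List ℕ := itMor gMor n [0]

lemma Fw_succ (n : ℕ) : Fw (n + 1) = Fw n ++ Fw1 n := by
  rw [Fw, itMor_succ']
  show itMor fibMor n ([0] ++ [1]) = _
  rw [itMor_append]; rfl

lemma Fw1_succ (n : ℕ) : Fw1 (n + 1) = Fw n := by
  rw [Fw1, itMor_succ']; rfl

lemma Gw_succ (n : ℕ) : Gw (n + 1) = Gw n ++ Gw0 n := by
  rw [Gw, itMor_succ']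
  show itMor gMor n ([1] ++ [0]) = _
  rw [itMor_append]; rfl

lemma Gw0_succ (n : ℕ) : Gw0 (n + 2) = Gw (n + 1) := by
  rw [Gw0, itMor_succ']
  show itMor gMor (n + 1) [2] = _
  rw [itMor_succ']
  show itMor gMor n ([1] ++ [0]) = _
  rw [itMor_append]
  rw [Gw_succ]; rfl

/-- The key claim: `0 · ρ(gⁿ⁺¹(1)) = fⁿ⁺¹(0) · 0` and `0 · ρ(gⁿ⁺¹(0)) = fⁿ⁺¹(1) · 0`. -/
lemma key (n : ℕ) :
    0 :: (Gw (n + 1)).map ρCode = Fw (n + 1) ++ [0] ∧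
    0 :: (Gw0 (n + 1)).map ρCode = Fw1 (n + 1) ++ [0] := by
  induction n with
  | zero =>
      constructor <;> rfl
  | succ n ih =>
      obtain ⟨h1, h2⟩ := ih
      constructor
      · rw [Gw_succ, Fw_succ, List.map_append]
        have : (0 : ℕ) :: ((Gw (n + 1)).map ρCode ++ (Gw0 (n + 1)).map ρCode)
            = (0 :: (Gw (n + 1)).map ρCode) ++ (Gw0 (n + 1)).map ρCode := rfl
        rw [this, h1, List.append_assoc, List.append_assoc, ← h2]
        rfl
      · rw [Gw0_succ, Fw1_succ, h1]

lemma Gw_len (n : ℕ) : n + 2 ≤ (Gw (n + 1)).length ∧ 1 ≤ (Gw0 (n + 1)).length := by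
  induction n with
  | zero => constructor <;> decide
  | succ n ih =>
      obtain ⟨h1, h2⟩ := ih
      constructor
      · rw [Gw_succ, List.length_append]; omega
      · rw [Gw0_succ]; omega

lemma FG_len (n : ℕ) : (Fw (n + 1)).length = (Gw (n + 1)).length := by
  have := congrArg List.length (key n).1
  simp at this
  omega

/-- `ρ(g^∞(1)) = tail(fib)`: the coding `ρ` applied letterwise to the fixed point of
`g` starting at `1` equals the binary Fibonacci sequence with its first letter removed. -/
theorem rho_g_eq_tail_fib (σf σg : ℕ → ℕ)
    (hf0 : σf 0 = 0) (hffix : seqFlat fibMor σf = σf)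
    (hg0 : σg 0 = 1) (hgfix : seqFlat gMor σg = σg) :
    ∀ n, ρCode (σg n) = σf (n + 1) := by
  have hnef : ∀ c, 1 ≤ (fibMor c).length := by
    intro c; unfold fibMor; split <;> simp
  have hneg : ∀ c, 1 ≤ (gMor c).length := by
    intro c; unfold gMor; split <;> simp
  intro n
  -- work with the words of index n+1
  obtain ⟨hGlen, -⟩ := Gw_len n
  have hFlen := FG_len n
  have hGn : n < (Gw (n + 1)).length := by omega
  have hFn1 : n + 1 < (Fw (n + 1)).length := by omega
  -- σg agrees with Gw
  have hg : (Gw (n + 1)).getD n 1 = σg n := by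
    have := itMor_getD gMor σg hneg hgfix (n + 1) n 1
    rw [hg0] at this
    exact this hGn
  -- σf agrees with Fw
  have hfval : (Fw (n + 1)).getD (n + 1) 0 = σf (n + 1) := by
    have := itMor_getD fibMor σf hnef hffix (n + 1) (n + 1) 0
    rw [hf0] at this
    exact this hFn1
  -- relate via the key claim
  have h1 := (key n).1
  calc ρCode (σg n) = ρCode ((Gw (n + 1)).getD n 1) := by rw [hg]
    _ = ((Gw (n + 1)).map ρCode).getD n (ρCode 1) := (List.getD_map _ _ _).symm
    _ = ((0 : ℕ) :: (Gw (n + 1)).map ρCode).getD (n + 1) (ρCode 1) := by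
          rw [List.getD_cons_succ]
    _ = (Fw (n + 1) ++ [0]).getD (n + 1) (ρCode 1) := by rw [h1]
    _ = (Fw (n + 1)).getD (n + 1) (ρCode 1) := List.getD_append _ _ _ _ hFn1
    _ = σf (n + 1) := by
          rw [List.getD_eq_getElem _ _ hFn1] at hfval ⊢
          exact hfval
end

section
/- With f(0) = 01, f(1) = 0, g(0) = 2, g(1) = g(2) = 10, and the coding μ defined by μ(1) = 0, μ(0) = 1, μ(2) = 0 on {0,1,2}: μ(g^∞(1)) = f^∞(0), i.e. the binary Fibonacci sequence fib equals μ applied letterwise to the fixed point of g starting at 1. -/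
/-- The coding `μ 0 = 1`, `μ 1 = μ 2 = 0`. -/
def μCode : ℕ → ℕ := fun n => if n = 0 then 1 else 0

set_option linter.deprecated false in
lemma bind_eq_flatMap {α β : Type*} (l : List α) (f : α → List β) :
    List.flatMap f l = l.flatMap f := rfl

lemma seqFlat_eq {Γ : Type*} (f : Γ → List Γ) (σ : ℕ → Γ) (n : ℕ) :
    seqFlat f σ n = (((List.range (n + 1)).flatMap fun i => f (σ i)).getD n (σ 0)) := rfl

lemma len_bind_ge {f : ℕ → List ℕ} (hf : ∀ a, 1 ≤ (f a).length) (σ : ℕ → ℕ) :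
    ∀ n, n ≤ ((List.range n).flatMap fun i => f (σ i)).length := by
  intro n
  induction n with
  | zero => simp
  | succ n ih =>
    rw [List.range_succ, List.flatMap_append, List.length_append]
    have := hf (σ n)
    simp only [List.flatMap_cons, List.flatMap_nil, List.append_nil]
    omega

lemma len_bind_gt {f : ℕ → List ℕ} (hf : ∀ a, 1 ≤ (f a).length) (σ : ℕ → ℕ)
    (h0 : 2 ≤ (f (σ 0)).length) : ∀ n, 1 ≤ n →
    n + 1 ≤ ((List.range n).flatMap fun i => f (σ i)).length := by
  intro n
  induction n with
  | zero => omega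
  | succ n ih =>
    intro _
    rcases Nat.eq_zero_or_pos n with hn | hn
    · subst hn; simpa using h0
    · rw [List.range_succ, List.flatMap_append, List.length_append]
      have h1 := hf (σ n)
      have h2 := ih hn
      simp only [List.flatMap_cons, List.flatMap_nil, List.append_nil]
      omega

lemma fixpt_uniq {f : ℕ → List ℕ} (hf : ∀ a, 1 ≤ (f a).length)
    {σ τ : ℕ → ℕ} (hσ : seqFlat f σ = σ) (hτ : seqFlat f τ = τ)
    (h0 : σ 0 = τ 0) (h2 : 2 ≤ (f (σ 0)).length) : σ = τ := by
  funext n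
  induction n using Nat.strong_induction_on with
  | _ n ih =>
    rcases Nat.eq_zero_or_pos n with hn | hn
    · subst hn; exact h0
    · have key : ∀ (ρ : ℕ → ℕ), (∀ i < n, ρ i = σ i) → seqFlat f ρ n
          = ((List.range n).flatMap fun i => f (σ i)).getD n (σ 0) := by
        intro ρ hρ
        have hρ0 : ρ 0 = σ 0 := hρ 0 hn
        have hbind : ((List.range n).flatMap fun i => f (ρ i))
            = (List.range n).flatMap fun i => f (σ i) := by
          apply List.flatMap_congr
          intro i hi
          rw [hρ i (List.mem_range.mp hi)]
        have hlen : n < ((List.range n).flatMap fun i => f (σ i)).length := by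
          have := len_bind_gt hf σ h2 n hn
          omega
        rw [seqFlat_eq, List.range_succ, List.flatMap_append, hbind, hρ0,
          List.getD_append _ _ _ _ hlen]
      have hσn := key σ (fun i _ => rfl)
      have hτn := key τ (fun i hi => (ih i hi).symm)
      rw [hσ] at hσn
      rw [hτ] at hτn
      rw [hσn, hτn]

lemma μ_gMor (a : ℕ) : fibMor (μCode a) = (gMor a).map μCode := by
  by_cases h : a = 0 <;> simp [fibMor, gMor, μCode, h]

/-- `μ(g^∞(1)) = fib`: the binary Fibonacci sequence `f^∞(0)` equals the coding `μ`
applied letterwise to the fixed point of `g` starting at `1`. -/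
theorem mu_g_eq_fib (σf σg : ℕ → ℕ)
    (hf0 : σf 0 = 0) (hffix : seqFlat fibMor σf = σf)
    (hg0 : σg 0 = 1) (hgfix : seqFlat gMor σg = σg) :
    ∀ n, μCode (σg n) = σf n := by
  have hglen : ∀ a, 1 ≤ (gMor a).length := by
    intro a; by_cases h : a = 0 <;> simp [gMor, h]
  have hflen : ∀ a, 1 ≤ (fibMor a).length := by
    intro a; by_cases h : a = 0 <;> simp [fibMor, h]
  set τ : ℕ → ℕ := fun n => μCode (σg n) with hτdef
  have hτ0 : τ 0 = 0 := by simp [hτdef, hg0, μCode]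
  have hτfix : seqFlat fibMor τ = τ := by
    funext n
    have hlen : n < ((List.range (n + 1)).flatMap fun i => gMor (σg i)).length := by
      have := len_bind_ge hglen σg (n + 1); omega
    rw [seqFlat_eq]
    simp only [hτdef]
    have hb : ((List.range (n + 1)).flatMap fun i => fibMor (μCode (σg i)))
        = (((List.range (n + 1)).flatMap fun i => gMor (σg i)).map μCode) := by
      rw [List.map_flatMap]
      exact List.flatMap_congr fun i _ => μ_gMor (σg i)
    rw [hb, List.getD_eq_getElem _ _ (by simpa using hlen), List.getElem_map]
    have := congrFun hgfix n
    rw [seqFlat_eq, List.getD_eq_getElem _ _ hlen] at this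
    rw [this]
  have := fixpt_uniq hflen hτfix hffix (by rw [hτ0, hf0])
    (by rw [hτ0]; simp [fibMor])
  intro n
  exact congrFun this n
end

section
/- Auxiliary claim for Theorem on tail(fib): with f(0)=01, f(1)=0, g(0)=2, g(1)=g(2)=10, ρ(0)=ρ(2)=0, ρ(1)=1, for every n ∈ ℕ: writing fⁿ(0) = 0·vₙ and fⁿ(1) = 0·uₙ (both fⁿ(0) and fⁿ(1) start with 0), one has ρ(gⁿ(1)) = vₙ·0 and ρ(gⁿ(0)) = uₙ·0. -/
lemma wordIter_succ {Γ : Type*} (f : Γ → List Γ) (n : ℕ) (w : List Γ) :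
    wordIter f (n + 1) w = wordIter f n (w.flatMap f) := by
  simp [wordIter, Function.iterate_succ_apply]

lemma wordIter_append {Γ : Type*} (f : Γ → List Γ) (n : ℕ) (a b : List Γ) :
    wordIter f n (a ++ b) = wordIter f n a ++ wordIter f n b := by
  induction n generalizing a b with
  | zero => simp [wordIter]
  | succ n ih =>
    simp only [wordIter_succ, List.flatMap_append, ih]

lemma gIter_two (n : ℕ) (hn : 1 ≤ n) : wordIter gMor n [2] = wordIter gMor n [1] := by
  obtain ⟨m, rfl⟩ := Nat.exists_eq_add_of_le hn
  rw [Nat.add_comm, wordIter_succ, wordIter_succ]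
  rfl

/-- Auxiliary claim: for every `n ≥ 1`, writing `fⁿ(0) = 0·vₙ` and `fⁿ(1) = 0·uₙ`
(both start with `0`), one has `ρ(gⁿ(1)) = vₙ·0` and `ρ(gⁿ(0)) = uₙ·0`. -/
theorem rho_g_aux_claim :
    ∀ n, 1 ≤ n → ∃ (v u : List ℕ),
      wordIter fibMor n [0] = 0 :: v ∧
      wordIter fibMor n [1] = 0 :: u ∧
      (wordIter gMor n [1]).map ρCode = v ++ [0] ∧
      (wordIter gMor n [0]).map ρCode = u ++ [0] := by
  intro n hn
  induction n with
  | zero => omega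
  | succ n ih =>
    rcases Nat.eq_or_lt_of_le hn with h | h
    · -- n + 1 = 1
      obtain rfl : n = 0 := by omega
      exact ⟨[1], [], by decide, by decide, by decide, by decide⟩
    · have hn1 : 1 ≤ n := by omega
      obtain ⟨v, u, h0, h1, hg1, hg0⟩ := ih hn1
      refine ⟨v ++ 0 :: u, v, ?_, ?_, ?_, ?_⟩
      · rw [wordIter_succ]
        have : ([0] : List ℕ).flatMap fibMor = [0] ++ [1] := rfl
        rw [this, wordIter_append, h0, h1]
        simp
      · rw [wordIter_succ]
        have : ([1] : List ℕ).flatMap fibMor = [0] := rfl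
        rw [this, h0]
      · rw [wordIter_succ]
        have : ([1] : List ℕ).flatMap gMor = [1] ++ [0] := rfl
        rw [this, wordIter_append, List.map_append, hg1, hg0]
        simp
      · rw [wordIter_succ]
        have : ([0] : List ℕ).flatMap gMor = [2] := rfl
        rw [this, gIter_two n hn1, hg1]
end
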